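/- arXiv:1905.12360 — 12 statements merged into one kernel-verified Lean document; each statement's English description precedes it below -/
import Mathlib

section
/- Let m ≥ 0, 1 ≤ b ≤ p-1, and r > m with r ≡ a mod (p-1) where 1 ≤ a ≤ p-1. Then ∑_{0 ≤ l ≤ r, l ≡ b mod (p-1)} C(r,l)·C(l,m) ≡ C(r,m)·C([a-m],[b-m]) + C(r,m)·δ mod p, where δ = 1 if [b-m] = p-1 and δ = 0 otherwise. -/
lemma aux_rep_unique {q X Y : ℕ} (hX1 : 1 ≤ X) (hX2 : X ≤ q) (hY1 : 1 ≤ Y) (hY2 : Y ≤ q)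
    (h : X % q = Y % q) : X = Y := by
  rcases eq_or_lt_of_le hX2 with hx | hx
  · rcases eq_or_lt_of_le hY2 with hy | hy
    · omega
    · rw [hx, Nat.mod_self, Nat.mod_eq_of_lt hy] at h; omega
  · rw [Nat.mod_eq_of_lt hx] at h
    rcases eq_or_lt_of_le hY2 with hy | hy
    · rw [hy, Nat.mod_self] at h; omega
    · rw [Nat.mod_eq_of_lt hy] at h; omega

lemma aux_mod_shift {q j m b B : ℕ} (hBb : (B : ℤ) ≡ (b : ℤ) - (m : ℤ) [ZMOD (q : ℤ)]) :
    (j % q = B % q) ↔ ((j + m) % q = b % q) := by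
  have hBm : (B : ℤ) + (m : ℤ) ≡ (b : ℤ) [ZMOD (q : ℤ)] := by
    have := hBb.add_right (m : ℤ); simpa using this
  constructor
  · intro h
    have h' : (j : ℤ) ≡ (B : ℤ) [ZMOD (q : ℤ)] := Int.natCast_modEq_iff.mpr h
    have h2 : ((j : ℤ) + m) ≡ (b : ℤ) [ZMOD (q : ℤ)] := (h'.add_right (m : ℤ)).trans hBm
    have h3 : ((j + m : ℕ) : ℤ) ≡ ((b : ℕ) : ℤ) [ZMOD ((q : ℕ) : ℤ)] := by push_cast; exact h2
    exact Int.natCast_modEq_iff.mp h3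
  · intro h
    have h' : ((j + m : ℕ) : ℤ) ≡ ((b : ℕ) : ℤ) [ZMOD ((q : ℕ) : ℤ)] := Int.natCast_modEq_iff.mpr h
    have h2 : (j : ℤ) + m ≡ (B : ℤ) + m [ZMOD (q : ℤ)] := by
      have : (j : ℤ) + m ≡ (b : ℤ) [ZMOD (q : ℤ)] := by push_cast at h'; exact h'
      exact this.trans hBm.symm
    have h3 : (j : ℤ) ≡ (B : ℤ) [ZMOD (q : ℤ)] := h2.add_right_cancel' (m : ℤ) |>.symm.symm
    exact Int.natCast_modEq_iff.mp h3

lemma aux_choose_pred (p : ℕ) [hp : Fact p.Prime] : ∀ k, k ≤ p - 1 →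
    (((p - 1).choose k : ℕ) : ZMod p) = (-1) ^ k := by
  intro k
  induction k with
  | zero => simp
  | succ k ih =>
    intro hk
    have hppos : 2 ≤ p := hp.out.two_le
    have hk' : k ≤ p - 1 := by omega
    have h := Nat.choose_succ_right_eq (p - 1) k
    have hcast : (((p - 1).choose (k + 1) : ℕ) : ZMod p) * ((k : ZMod p) + 1)
        = (((p - 1).choose k : ℕ) : ZMod p) * (((p - 1 - k : ℕ) : ZMod p)) := by
      have := congrArg (fun x : ℕ => (x : ZMod p)) h
      push_cast at this; convert this using 2 <;> push_cast <;> ring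
    have hsub : ((p - 1 - k : ℕ) : ZMod p) = -((k : ZMod p) + 1) := by
      have h2 : (((p - 1 - k) + (k + 1) : ℕ) : ZMod p) = 0 := by
        rw [show (p - 1 - k) + (k + 1) = p by omega]; exact ZMod.natCast_self p
      push_cast at h2
      linear_combination h2
    have hne : ((k : ZMod p) + 1) ≠ 0 := by
      intro hzero
      have : ((k + 1 : ℕ) : ZMod p) = 0 := by push_cast; exact hzero
      rw [ZMod.natCast_eq_zero_iff] at this
      have := Nat.le_of_dvd (by omega) this
      omega
    apply mul_right_cancel₀ hne
    rw [hcast, ih hk', hsub, pow_succ]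
    ring

lemma aux_rhs_id (p : ℕ) [hp : Fact p.Prime] (A0 B : ℕ)
    (hA01 : 1 ≤ A0) (hA02 : A0 ≤ p - 1) (hB1 : 1 ≤ B) (hB2 : B ≤ p - 1) :
    ((((if A0 = p - 1 then 1 else A0 + 1).choose B : ℕ)) : ZMod p)
      + (if B = p - 1 then (1 : ZMod p) else 0)
    = ((A0.choose (if B = 1 then p - 1 else B - 1) : ℕ) : ZMod p)
      + (if (if B = 1 then p - 1 else B - 1) = p - 1 then (1 : ZMod p) else 0)
      + ((A0.choose B : ℕ) : ZMod p) + (if B = p - 1 then (1 : ZMod p) else 0) := by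
  have hp2 : 2 ≤ p := hp.out.two_le
  by_cases hA0q : A0 = p - 1
  · rw [if_pos hA0q]
    rcases eq_or_lt_of_le hp2 with hp2' | hp3
    · -- p = 2
      subst hp2'
      have hBv : B = 1 := by omega
      have hAv : A0 = 1 := by omega
      subst hBv; subst hAv
      norm_num
      rfl
    · -- p ≥ 3
      have hq2 : 2 ≤ p - 1 := by omega
      have hodd : Odd p := hp.out.odd_of_ne_two (by omega)
      have hm1 : ((p - 1 : ℕ) : ZMod p) = -1 := by
        have h0 : ((p : ℕ) : ZMod p) = 0 := ZMod.natCast_self p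
        push_cast [Nat.cast_sub (by omega : 1 ≤ p)]
        rw [h0]; ring
      by_cases hB : B = 1
      · subst hB
        rw [show (if (1:ℕ) = 1 then p - 1 else 1 - 1) = p - 1 from if_pos rfl,
          if_neg (by omega : (1:ℕ) ≠ p - 1), if_pos (rfl : p - 1 = p - 1)]
        rw [hA0q, Nat.choose_one_right, Nat.choose_self, Nat.choose_one_right, hm1]
        push_cast; ring
      · rw [show (if B = 1 then p - 1 else B - 1) = B - 1 from if_neg hB]
        by_cases hBq : B = p - 1
        · rw [if_pos hBq, if_neg (by omega : B - 1 ≠ p - 1)]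
          rw [hA0q, hBq, Nat.choose_self, Nat.choose_eq_zero_of_lt (by omega : 1 < p - 1)]
          rw [aux_choose_pred p (p - 1 - 1) (by omega)]
          have hoddexp : Odd (p - 1 - 1) := by
            obtain ⟨t, ht⟩ := hodd; exact ⟨t - 1, by omega⟩
          rw [hoddexp.neg_one_pow]
          push_cast; ring
        · rw [if_neg hBq, if_neg (by omega : B - 1 ≠ p - 1)]
          rw [Nat.choose_eq_zero_of_lt (by omega : 1 < B), hA0q]
          rw [aux_choose_pred p (B - 1) (by omega), aux_choose_pred p B hB2]
          have hpow : ((-1 : ZMod p)) ^ B = (-1) ^ (B - 1) * (-1) := by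
            conv_lhs => rw [show B = (B - 1) + 1 by omega]
            rw [pow_succ]
          rw [hpow]
          push_cast; ring
  · rw [if_neg hA0q]
    have hA0lt : A0 < p - 1 := lt_of_le_of_ne hA02 hA0q
    by_cases hB : B = 1
    · subst hB
      rw [show (if (1:ℕ) = 1 then p - 1 else 1 - 1) = p - 1 from if_pos rfl,
        if_neg (by omega : (1:ℕ) ≠ p - 1), if_pos (rfl : p - 1 = p - 1)]
      rw [Nat.choose_one_right, Nat.choose_one_right,
        Nat.choose_eq_zero_of_lt (by omega : A0 < p - 1)]
      push_cast; ring
    · rw [show (if B = 1 then p - 1 else B - 1) = B - 1 from if_neg hB,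
        if_neg (by omega : B - 1 ≠ p - 1)]
      have hpas : (A0 + 1).choose B = A0.choose (B - 1) + A0.choose B := by
        obtain ⟨c, rfl⟩ : ∃ c, B = c + 1 := ⟨B - 1, by omega⟩
        simp [Nat.choose_succ_succ]
      rw [hpas]
      push_cast; ring

lemma aux_key_sum (p : ℕ) [hp : Fact p.Prime] (n : ℕ) (hn : 1 ≤ n) :
    ∀ A B : ℕ, 1 ≤ A → A ≤ p - 1 → 1 ≤ B → B ≤ p - 1 → n % (p - 1) = A % (p - 1) →
      (∑ j ∈ Finset.range (n + 1),
          if j % (p - 1) = B % (p - 1) then ((n.choose j : ℕ) : ZMod p) else 0)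
        = ((A.choose B : ℕ) : ZMod p) + (if B = p - 1 then (1 : ZMod p) else 0) := by
  have hp2 : 2 ≤ p := hp.out.two_le
  have hq1 : 1 ≤ p - 1 := by omega
  induction n, hn using Nat.le_induction with
  | base =>
    intro A B hA1 hA2 hB1 hB2 hmod
    rw [Finset.sum_range_succ, Finset.sum_range_succ, Finset.sum_range_zero, zero_add]
    rcases eq_or_lt_of_le hp2 with hp2' | hp3
    · -- p = 2
      have hA : A = 1 := by omega
      have hB : B = 1 := by omega
      subst hA; subst hB; subst hp2'
      norm_num
    · have hq2 : 2 ≤ p - 1 := by omega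
      have h1m : (1 : ℕ) % (p - 1) = 1 := Nat.mod_eq_of_lt (by omega)
      have hA : A = 1 := aux_rep_unique hA1 hA2 le_rfl hq1 hmod.symm
      subst hA
      by_cases hBq : B = p - 1
      · have hBmod : B % (p - 1) = 0 := by rw [hBq, Nat.mod_self]
        rw [if_pos (by rw [Nat.zero_mod, hBmod]), if_neg (by rw [h1m, hBmod]; omega),
          if_pos hBq, hBq, Nat.choose_eq_zero_of_lt (by omega : 1 < p - 1)]
        norm_num
      · have hBlt : B < p - 1 := by omega
        have hBmod : B % (p - 1) = B := Nat.mod_eq_of_lt hBlt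
        rw [if_neg (by rw [Nat.zero_mod, hBmod]; omega), if_neg hBq]
        by_cases hB1' : B = 1
        · subst hB1'
          rw [if_pos rfl]
          norm_num
        · rw [if_neg (by rw [h1m, hBmod]; omega),
            Nat.choose_eq_zero_of_lt (by omega : 1 < B)]
          norm_num
  | succ n hn ih =>
    intro A' B hA'1 hA'2 hB1 hB2 hmod
    set q := p - 1 with hqdef
    have hnq : n % q < q := Nat.mod_lt n (by omega)
    set A0 : ℕ := if n % q = 0 then q else n % q with hA0def
    have hA01 : 1 ≤ A0 := by rw [hA0def]; split <;> omega
    have hA02 : A0 ≤ q := by rw [hA0def]; split <;> omega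
    have hA0mod : n % q = A0 % q := by
      rw [hA0def]; split
      · rw [Nat.mod_self]; assumption
      · exact (Nat.mod_eq_of_lt hnq).symm
    set B' : ℕ := if B = 1 then q else B - 1 with hB'def
    have hB'1 : 1 ≤ B' := by rw [hB'def]; split <;> omega
    have hB'2 : B' ≤ q := by rw [hB'def]; split <;> omega
    -- the shift equivalence : i % q = B' % q ↔ (i+1) % q = B % q
    have hB'int : (B' : ℤ) ≡ (B : ℤ) - (1 : ℕ) [ZMOD (q : ℤ)] := by
      rw [hB'def]; split
      · rename_i h; rw [h]
        have : ((q : ℤ)) ≡ 0 [ZMOD (q : ℤ)] := Int.modEq_zero_iff_dvd.mpr dvd_rfl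
        simpa using this
      · rename_i h
        have : ((B - 1 : ℕ) : ℤ) = (B : ℤ) - 1 := by
          push_cast [Nat.cast_sub hB1]; ring
        rw [this]; push_cast; exact Int.ModEq.refl _
    have hshift : ∀ i : ℕ, (i % q = B' % q) ↔ ((i + 1) % q = B % q) :=
      fun i => aux_mod_shift (b := B) (m := 1) (by exact_mod_cast hB'int)
    -- determine A'
    have hA'val : A' = if A0 = q then 1 else A0 + 1 := by
      apply aux_rep_unique hA'1 hA'2
      · split <;> omega
      · split <;> omega
      · rw [← hmod]
        have hstep : (n + 1) % q = (A0 + 1) % q := Nat.ModEq.add_right 1 hA0mod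
        rw [hstep]
        split
        · rename_i h; rw [h]
          rw [show q + 1 = 1 + q by omega, Nat.add_mod_right]
        · rfl
    -- split the sum via Pascal
    have hsplit :
        (∑ j ∈ Finset.range (n + 1 + 1), if j % q = B % q then (((n + 1).choose j : ℕ) : ZMod p) else 0)
      = (∑ i ∈ Finset.range (n + 1), if i % q = B' % q then ((n.choose i : ℕ) : ZMod p) else 0)
      + (∑ j ∈ Finset.range (n + 1), if j % q = B % q then ((n.choose j : ℕ) : ZMod p) else 0) := by
      rw [Finset.sum_range_succ'
        (fun j => if j % q = B % q then (((n + 1).choose j : ℕ) : ZMod p) else 0) (n + 1)]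
      have h1 : ∀ i, (if (i + 1) % q = B % q then (((n + 1).choose (i + 1) : ℕ) : ZMod p) else 0)
          = (if i % q = B' % q then ((n.choose i : ℕ) : ZMod p) else 0)
          + (if (i + 1) % q = B % q then ((n.choose (i + 1) : ℕ) : ZMod p) else 0) := by
        intro i
        by_cases hcond : (i + 1) % q = B % q
        · rw [if_pos hcond, if_pos ((hshift i).mpr hcond), if_pos hcond, Nat.choose_succ_succ]
          push_cast; ring
        · rw [if_neg hcond, if_neg (fun hh => hcond ((hshift i).mp hh)), if_neg hcond, add_zero]
      rw [Finset.sum_congr rfl (fun i _ => h1 i), Finset.sum_add_distrib, add_assoc]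
      congr 1
      have h0 : (if 0 % q = B % q then (((n + 1).choose 0 : ℕ) : ZMod p) else 0)
          = (if 0 % q = B % q then ((n.choose 0 : ℕ) : ZMod p) else 0) := by
        simp
      rw [h0, ← Finset.sum_range_succ'
        (fun j => if j % q = B % q then ((n.choose j : ℕ) : ZMod p) else 0) (n + 1),
        Finset.sum_range_succ]
      simp [Nat.choose_succ_self]
    rw [hsplit, ih A0 B' hA01 hA02 hB'1 hB'2 hA0mod, ih A0 B hA01 hA02 hB1 hB2 hA0mod, hA'val]
    have := aux_rhs_id p A0 B hA01 (hqdef ▸ hA02) hB1 (hqdef ▸ hB2)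
    rw [← hqdef] at this
    rw [← hB'def] at this
    rw [this]
    ring

/-- Lemma on binomial sums: for `m ≥ 0`, `1 ≤ b ≤ p-1`, `r > m`, `r ≡ a mod (p-1)` with
`1 ≤ a ≤ p-1`, and `A = [a-m]`, `B = [b-m]` the representatives in `{1,…,p-1}` of `a-m`,
`b-m` mod `(p-1)`:
`∑_{0 ≤ l ≤ r, l ≡ b mod (p-1)} C(r,l)C(l,m) ≡ C(r,m)·C(A,B) + C(r,m)·δ_{B,p-1} mod p`. -/
theorem stmt_2 (p : ℕ) [Fact p.Prime] (m b r a A B : ℕ)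
    (hb1 : 1 ≤ b) (hb2 : b ≤ p - 1) (hmr : m < r)
    (ha1 : 1 ≤ a) (ha2 : a ≤ p - 1) (hra : r % (p - 1) = a % (p - 1))
    (hA1 : 1 ≤ A) (hA2 : A ≤ p - 1) (hA : (A : ℤ) ≡ (a : ℤ) - (m : ℤ) [ZMOD ((p : ℤ) - 1)])
    (hB1 : 1 ≤ B) (hB2 : B ≤ p - 1) (hB : (B : ℤ) ≡ (b : ℤ) - (m : ℤ) [ZMOD ((p : ℤ) - 1)]) :
    (∑ l ∈ Finset.range (r + 1),
        if l % (p - 1) = b % (p - 1) then (r.choose l * l.choose m : ZMod p) else 0) =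
      (r.choose m : ZMod p) * (A.choose B : ZMod p) +
        (r.choose m : ZMod p) * (if B = p - 1 then 1 else 0) := by
  have hp2 : 2 ≤ p := (Fact.out : p.Prime).two_le
  have hqz : ((p - 1 : ℕ) : ℤ) = (p : ℤ) - 1 := by
    push_cast [Nat.cast_sub (by omega : 1 ≤ p)]; ring
  have hAz : (A : ℤ) ≡ (a : ℤ) - m [ZMOD ((p - 1 : ℕ) : ℤ)] := by rw [hqz]; exact hA
  have hBz : (B : ℤ) ≡ (b : ℤ) - m [ZMOD ((p - 1 : ℕ) : ℤ)] := by rw [hqz]; exact hB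
  have hn1 : 1 ≤ r - m := by omega
  have hnmod : (r - m) % (p - 1) = A % (p - 1) := by
    have h1 : (r : ℤ) ≡ (a : ℤ) [ZMOD ((p - 1 : ℕ) : ℤ)] := Int.natCast_modEq_iff.mpr hra
    have h2 : ((r - m : ℕ) : ℤ) = (r : ℤ) - m := by
      push_cast [Nat.cast_sub hmr.le]; ring
    have h3 : ((r - m : ℕ) : ℤ) ≡ (A : ℤ) [ZMOD ((p - 1 : ℕ) : ℤ)] := by
      rw [h2]; exact (h1.sub_right (m : ℤ)).trans hAz.symm
    exact Int.natCast_modEq_iff.mp h3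
  have hkey := aux_key_sum p (r - m) hn1 A B hA1 hA2 hB1 hB2 hnmod
  have htrans : (∑ l ∈ Finset.range (r + 1),
        if l % (p - 1) = b % (p - 1)
          then ((r.choose l : ℕ) : ZMod p) * ((l.choose m : ℕ) : ZMod p) else 0)
      = ((r.choose m : ℕ) : ZMod p) *
        (∑ j ∈ Finset.range (r - m + 1),
          if j % (p - 1) = B % (p - 1) then (((r - m).choose j : ℕ) : ZMod p) else 0) := by
    rw [Finset.mul_sum]
    have hstep1 : ∀ j ∈ Finset.range (r - m + 1),
        ((r.choose m : ℕ) : ZMod p) *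
          (if j % (p - 1) = B % (p - 1) then (((r - m).choose j : ℕ) : ZMod p) else 0)
        = (if (m + j) % (p - 1) = b % (p - 1)
            then ((r.choose (m + j) : ℕ) : ZMod p) * (((m + j).choose m : ℕ) : ZMod p) else 0) := by
      intro j hj
      simp only [Finset.mem_range] at hj
      have hcond : (j % (p - 1) = B % (p - 1)) ↔ ((m + j) % (p - 1) = b % (p - 1)) := by
        rw [Nat.add_comm m j]; exact aux_mod_shift hBz
      have hval : r.choose (m + j) * (m + j).choose m = r.choose m * (r - m).choose j := by
        rw [Nat.choose_mul (n := r) (by omega : m ≤ m + j),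
          Nat.add_sub_cancel_left]
      by_cases hc : j % (p - 1) = B % (p - 1)
      · rw [if_pos hc, if_pos (hcond.mp hc)]
        have hcast := congrArg (fun x : ℕ => (x : ZMod p)) hval
        push_cast at hcast
        rw [hcast]
      · rw [if_neg hc, if_neg (fun hh => hc (hcond.mpr hh)), mul_zero]
    rw [Finset.sum_congr rfl hstep1]
    have hreindex : (∑ j ∈ Finset.range (r - m + 1),
        (if (m + j) % (p - 1) = b % (p - 1)
            then ((r.choose (m + j) : ℕ) : ZMod p) * (((m + j).choose m : ℕ) : ZMod p) else 0))
      = ∑ l ∈ Finset.Ico m (r + 1),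
          (if l % (p - 1) = b % (p - 1)
            then ((r.choose l : ℕ) : ZMod p) * ((l.choose m : ℕ) : ZMod p) else 0) := by
      rw [Finset.sum_Ico_eq_sum_range]
      rw [show r + 1 - m = r - m + 1 by omega]
    rw [hreindex]
    rw [Finset.range_eq_Ico,
      ← Finset.sum_Ico_consecutive _ (by omega : 0 ≤ m) (by omega : m ≤ r + 1)]
    have hzero : (∑ l ∈ Finset.Ico 0 m,
        (if l % (p - 1) = b % (p - 1)
          then ((r.choose l : ℕ) : ZMod p) * ((l.choose m : ℕ) : ZMod p) else 0)) = 0 := by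
      apply Finset.sum_eq_zero
      intro l hl
      rw [Finset.mem_Ico] at hl
      rw [Nat.choose_eq_zero_of_lt hl.2]
      simp
    rw [hzero, zero_add]
  rw [htrans, hkey]
  ring
end

section
/- Let p ≤ r and write r = r_m p^m + ... + r_1 p + r_0 in base p. Then for every 0 ≤ b ≤ r_0 and every 1 ≤ u ≤ Σ_p(r) - r_0, there exists an integer s with p ≤ s ≤ r, s ≡ b mod p, Σ_p(s) = b + u, and C(r,s) ≢ 0 mod p. Moreover, if u < Σ_p(r) - r_0, then s can be chosen with s ≤ r - p. -/
section aux

variable {p : ℕ}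

private lemma lucas_step (hp : p.Prime) (n k : ℕ) :
    ((n.choose k : ℕ) : ZMod p) =
      (((n % p).choose (k % p) : ℕ) : ZMod p) * (((n / p).choose (k / p) : ℕ) : ZMod p) := by
  haveI : Fact p.Prime := ⟨hp⟩
  rw [← Nat.cast_mul]
  exact (ZMod.natCast_eq_natCast_iff _ _ _).mpr
    Choose.choose_modEq_choose_mod_mul_choose_div_nat

private lemma small_choose_ne_zero (hp : p.Prime) {a b : ℕ} (ha : a < p) (hb : b ≤ a) :
    ((a.choose b : ℕ) : ZMod p) ≠ 0 := by
  rw [Ne, ZMod.natCast_eq_zero_iff]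
  intro hdvd
  have h1 : a.choose b ∣ a.factorial :=
    ⟨b.factorial * (a - b).factorial, by
      rw [← Nat.choose_mul_factorial_mul_factorial hb]; ring⟩
  have h2 : p ∣ a.factorial := hdvd.trans h1
  exact absurd ((Nat.Prime.dvd_factorial hp).mp h2) (Nat.not_le.mpr ha)

private lemma mod_div_helper (hp2 : 1 < p) {c t : ℕ} (hc : c < p) :
    (c + p * t) % p = c ∧ (c + p * t) / p = t := by
  constructor
  · rw [Nat.add_mul_mod_self_left, Nat.mod_eq_of_lt hc]
  · rw [Nat.add_mul_div_left _ _ (by omega : 0 < p), Nat.div_eq_of_lt hc, Nat.zero_add]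

private lemma aux_choice (hp : p.Prime) :
    ∀ q u : ℕ, 1 ≤ u → u ≤ (Nat.digits p q).sum →
      ∃ t : ℕ, 1 ≤ t ∧ t ≤ q ∧ (Nat.digits p t).sum = u ∧
        ((q.choose t : ℕ) : ZMod p) ≠ 0 ∧ (u < (Nat.digits p q).sum → t < q) := by
  intro q
  induction q using Nat.strong_induction_on with
  | _ q ih =>
    intro u hu1 hu2
    have hp2 : 1 < p := hp.one_lt
    have hq0 : 0 < q := by
      rcases Nat.eq_zero_or_pos q with h | h
      · simp [h] at hu2; omega
      · exact h
    have hdig : Nat.digits p q = q % p :: Nat.digits p (q / p) := Nat.digits_def' hp2 hq0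
    have hsum : (Nat.digits p q).sum = q % p + (Nat.digits p (q / p)).sum := by
      rw [hdig]; simp
    have hmodlt : q % p < p := Nat.mod_lt _ (by omega)
    by_cases hcase : u ≤ q % p
    · have hup : u < p := lt_of_le_of_lt hcase hmodlt
      refine ⟨u, hu1, le_trans hcase (Nat.mod_le q p), ?_, ?_, ?_⟩
      · rw [Nat.digits_def' hp2 (by omega), Nat.mod_eq_of_lt hup, Nat.div_eq_of_lt hup]
        simp
      · rw [lucas_step hp, Nat.mod_eq_of_lt hup, Nat.div_eq_of_lt hup]
        simp only [Nat.choose_zero_right, Nat.cast_one, mul_one]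
        exact small_choose_ne_zero hp hmodlt hcase
      · intro hlt
        rcases Nat.eq_zero_or_pos (q / p) with h0 | h0
        · have he : Nat.digits p (q / p) = [] := by simp [h0]
          rw [hsum, he] at hlt
          simp at hlt
          have hmad : q % p + p * (q / p) = q := Nat.mod_add_div q p
          rw [h0, Nat.mul_zero] at hmad
          omega
        · have hpq : p ≤ q := (Nat.one_le_div_iff (by omega)).mp h0
          omega
    · push_neg at hcase
      have hqp_lt : q / p < q := Nat.div_lt_self hq0 hp2
      obtain ⟨t', ht'1, ht'q, ht'sum, ht'c, ht'lt⟩ :=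
        ih (q / p) hqp_lt (u - q % p) (by omega) (by omega)
      obtain ⟨hmod, hdiv⟩ := mod_div_helper hp2 (t := t') hmodlt
      have hmul : p * t' ≤ p * (q / p) := Nat.mul_le_mul_left p ht'q
      have hmad : q % p + p * (q / p) = q := Nat.mod_add_div q p
      have hpt' : p ≤ p * t' := Nat.le_mul_of_pos_right p ht'1
      refine ⟨q % p + p * t', by omega, by omega, ?_, ?_, ?_⟩
      · rw [Nat.digits_def' hp2 (by positivity), hmod, hdiv]
        simp only [List.sum_cons, ht'sum]
        omega
      · rw [lucas_step hp, hmod, hdiv, Nat.choose_self]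
        simp only [Nat.cast_one, one_mul]
        exact ht'c
      · intro hlt
        have ht' := ht'lt (by omega)
        have h1 : p * (t' + 1) ≤ p * (q / p) := Nat.mul_le_mul_left p (by omega)
        have h2 : p * (t' + 1) = p * t' + p := by ring
        omega

end aux

/-- Choice of `s`: for `p ≤ r`, `0 ≤ b ≤ r_0` (the constant base-`p` digit of `r`) and
`1 ≤ u ≤ Σ_p(r) - r_0`, there is `s` with `p ≤ s ≤ r`, `s ≡ b mod p`, `Σ_p(s) = b + u` and
`C(r,s) ≢ 0 mod p`; moreover if `u < Σ_p(r) - r_0` then `s` can be chosen with `s ≤ r - p`. -/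
theorem stmt_3 (p r : ℕ) (hp : p.Prime) (hr : p ≤ r) (b u : ℕ)
    (hb : b ≤ r % p) (hu1 : 1 ≤ u) (hu2 : u ≤ (Nat.digits p r).sum - r % p) :
    ∃ s : ℕ, p ≤ s ∧ s ≤ r ∧ s % p = b ∧ (Nat.digits p s).sum = b + u ∧
      (r.choose s : ZMod p) ≠ 0 ∧
      (u < (Nat.digits p r).sum - r % p → s ≤ r - p) := by
  haveI : Fact p.Prime := ⟨hp⟩
  have hp2 : 1 < p := hp.one_lt
  have hr0 : 0 < r := by omega
  have hdig : Nat.digits p r = r % p :: Nat.digits p (r / p) := Nat.digits_def' hp2 hr0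
  have hsum : (Nat.digits p r).sum = r % p + (Nat.digits p (r / p)).sum := by
    rw [hdig]; simp
  obtain ⟨t, ht1, htq, htsum, htc, htlt⟩ := aux_choice hp (r / p) u hu1 (by omega)
  have hmad : r % p + p * (r / p) = r := Nat.mod_add_div r p
  have hbp : b < p := lt_of_le_of_lt hb (Nat.mod_lt _ (by omega))
  obtain ⟨hmod, hdiv⟩ := mod_div_helper hp2 (t := t) hbp
  have hmul : p * t ≤ p * (r / p) := Nat.mul_le_mul_left p htq
  have hpt : p ≤ p * t := Nat.le_mul_of_pos_right p ht1
  refine ⟨b + p * t, by omega, by omega, hmod, ?_, ?_, ?_⟩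
  · rw [Nat.digits_def' hp2 (by omega), hmod, hdiv]
    simp only [List.sum_cons, htsum]
  · rw [lucas_step hp, hmod, hdiv]
    exact mul_ne_zero (small_choose_ne_zero hp (Nat.mod_lt _ (by omega)) hb) htc
  · intro hlt
    have ht' := htlt (by omega)
    have h1 : p * (t + 1) ≤ p * (r / p) := Nat.mul_le_mul_left p (by omega)
    have h2 : p * (t + 1) = p * t + p := by ring
    omega
end

section
/- Let r > p, let r_0 and r_1 be the digits of p^0 and p^1 in the base-p expansion of r. Then: (i) Σ_p(r-1) = Σ_p(r-p) if and only if r_0 ≠ 0 and r_1 ≠ 0; (ii) Σ_p(r-1) < Σ_p(r-p) if and only if r_1 = 0 and r_0 ≠ 0; (iii) Σ_p(r-1) > Σ_p(r-p) if and only if r_0 = 0. -/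
private lemma sumd (p : ℕ) (hp : 2 ≤ p) (m a : ℕ) (ha : a < p) (h : 0 < p * m + a) :
    (Nat.digits p (p * m + a)).sum = a + (Nat.digits p m).sum := by
  rw [Nat.digits_def' (by omega : 1 < p) h]
  have h1 : (p * m + a) % p = a := by
    rw [Nat.mul_add_mod, Nat.mod_eq_of_lt ha]
  have h2 : (p * m + a) / p = m := by
    rw [Nat.mul_add_div (by omega), Nat.div_eq_of_lt ha, Nat.add_zero]
  rw [h1, h2, List.sum_cons]

private lemma lemA (p : ℕ) (hp : 2 ≤ p) (n : ℕ) (hn : 0 < n) (h : n % p ≠ 0) :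
    (Nat.digits p n).sum = (Nat.digits p (n - 1)).sum + 1 := by
  have hdm := Nat.div_add_mod n p
  have hlt : n % p < p := Nat.mod_lt _ (by omega)
  have e1 : n = p * (n / p) + n % p := by omega
  have e2 : n - 1 = p * (n / p) + (n % p - 1) := by omega
  have s1 := sumd p hp (n / p) (n % p) hlt (by omega)
  rw [← e1] at s1
  by_cases hq : 0 < p * (n / p) + (n % p - 1)
  · have s2 := sumd p hp (n / p) (n % p - 1) (by omega) hq
    rw [← e2] at s2
    omega
  · have h0 : p * (n / p) = 0 := by omega
    have h1 : n % p = 1 := by omega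
    have hnp : n / p = 0 := by
      by_contra hc
      have h2 : 1 ≤ n / p := Nat.pos_of_ne_zero hc
      nlinarith
    have hn1 : n = 1 := by omega
    rw [hn1]
    norm_num
    rw [Nat.digits_def' (by omega : 1 < p) one_pos, Nat.mod_eq_of_lt (by omega : 1 < p),
      Nat.div_eq_of_lt (by omega : 1 < p)]
    simp

private lemma lemB (p : ℕ) (hp : 2 ≤ p) : ∀ n, 0 < n → n % p = 0 →
    (Nat.digits p n).sum ≤ (Nat.digits p (n - 1)).sum := by
  intro n
  induction n using Nat.strong_induction_on with
  | _ n ih =>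
    intro hn h
    have hdm := Nat.div_add_mod n p
    have hpn : p ≤ n := Nat.le_of_dvd hn (Nat.dvd_of_mod_eq_zero h)
    have hq : 0 < n / p := Nat.div_pos hpn (by omega)
    have hmul : p * (n / p) = p * (n / p - 1) + p := by
      calc p * (n / p) = p * (n / p - 1 + 1) := by rw [Nat.sub_add_cancel hq]
        _ = p * (n / p - 1) + p := by ring
    have e1 : n = p * (n / p) + 0 := by omega
    have e2 : n - 1 = p * (n / p - 1) + (p - 1) := by omega
    have s1 := sumd p hp (n / p) 0 (by omega) (by omega)
    rw [← e1] at s1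
    have s2 := sumd p hp (n / p - 1) (p - 1) (by omega) (by omega)
    rw [← e2] at s2
    by_cases hc : (n / p) % p = 0
    · have := ih (n / p) (by nlinarith) hq hc
      omega
    · have := lemA p hp (n / p) hq hc
      omega

/-- Comparison of `Σ_p(r-1)` and `Σ_p(r-p)` in terms of the digits `r_0 = r % p` and
`r_1 = r / p % p` of the base-`p` expansion of `r > p`. -/
theorem stmt_4 (p r : ℕ) (hp : p.Prime) (hr : p < r) :
    ((Nat.digits p (r - 1)).sum = (Nat.digits p (r - p)).sum ↔ r % p ≠ 0 ∧ r / p % p ≠ 0) ∧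
    ((Nat.digits p (r - 1)).sum < (Nat.digits p (r - p)).sum ↔ r / p % p = 0 ∧ r % p ≠ 0) ∧
    ((Nat.digits p (r - p)).sum < (Nat.digits p (r - 1)).sum ↔ r % p = 0) := by
  have hp2 : 2 ≤ p := hp.two_le
  have hdm := Nat.div_add_mod r p
  have hlt : r % p < p := Nat.mod_lt _ (by omega)
  have hq : 0 < r / p := Nat.div_pos (by omega) (by omega)
  have hmul : p * (r / p) = p * (r / p - 1) + p := by
    calc p * (r / p) = p * (r / p - 1 + 1) := by rw [Nat.sub_add_cancel hq]
      _ = p * (r / p - 1) + p := by ring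
  by_cases h0 : r % p = 0
  · -- r = p * q with q ≥ 2
    have hq2 : 2 ≤ r / p := by
      have h1 : p * 1 < p * (r / p) := by omega
      have := Nat.lt_of_mul_lt_mul_left h1
      omega
    have e1 : r - 1 = p * (r / p - 1) + (p - 1) := by omega
    have e2 : r - p = p * (r / p - 1) + 0 := by omega
    have s1 := sumd p hp2 (r / p - 1) (p - 1) (by omega) (by omega)
    rw [← e1] at s1
    have hmul2 : p * (r / p - 1) = p * (r / p - 2) + p := by
      calc p * (r / p - 1) = p * (r / p - 2 + 1) := by
            rw [show r / p - 2 + 1 = r / p - 1 by omega]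
        _ = p * (r / p - 2) + p := by ring
    have s2 := sumd p hp2 (r / p - 1) 0 (by omega) (by omega)
    rw [← e2] at s2
    refine ⟨?_, ?_, ?_⟩ <;> constructor <;> intro h <;> omega
  · have e1 : r - 1 = p * (r / p) + (r % p - 1) := by omega
    have e2 : r - p = p * (r / p - 1) + r % p := by omega
    have s1 := sumd p hp2 (r / p) (r % p - 1) (by omega) (by omega)
    rw [← e1] at s1
    have s2 := sumd p hp2 (r / p - 1) (r % p) hlt (by omega)
    rw [← e2] at s2
    by_cases hc : (r / p) % p = 0
    · have hle := lemB p hp2 (r / p) hq hc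
      refine ⟨?_, ?_, ?_⟩ <;> constructor <;> intro h <;> omega
    · have heq := lemA p hp2 (r / p) hq hc
      refine ⟨?_, ?_, ?_⟩ <;> constructor <;> intro h <;> omega
end

section
/- Let 1 ≤ i ≤ p-1 and p ≤ r, and let r_0 be the constant digit of the base-p expansion of r. If r_0 < i, then for every j with r_0 < j ≤ i one has Σ_p(r-j) = Σ_p(r-i) + (i - j). -/
/-- If `1 ≤ i ≤ p-1`, `p ≤ r` and `r_0 = r % p < i`, then for every `j` with `r_0 < j ≤ i`,
`Σ_p(r-j) = Σ_p(r-i) + (i - j)`. -/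
theorem stmt_5 (p r i : ℕ) (hp : p.Prime) (hi1 : 1 ≤ i) (hi2 : i ≤ p - 1)
    (hr : p ≤ r) (h0 : r % p < i) (j : ℕ) (hj1 : r % p < j) (hj2 : j ≤ i) :
    (Nat.digits p (r - j)).sum = (Nat.digits p (r - i)).sum + (i - j) := by
  have hp2 : 2 ≤ p := hp.two_le
  have hrq : p * (r / p) + r % p = r := Nat.div_add_mod r p
  have hr0 : r % p < p := Nat.mod_lt _ (by omega)
  have hq1 : 1 ≤ r / p := Nat.one_le_div_iff (by omega) |>.mpr hr
  have key : ∀ k, r % p < k → k ≤ p - 1 →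
      (Nat.digits p (r - k)).sum = (p + r % p - k) + (Nat.digits p (r / p - 1)).sum := by
    intro k hk1 hk2
    have hms : p * (r / p - 1) + p = p * (r / p) := by
      have : p ≤ p * (r / p) := Nat.le_mul_of_pos_right p hq1
      rw [Nat.mul_sub, mul_one]; omega
    have he : r - k = p * (r / p - 1) + (p + r % p - k) := by omega
    have hlt : p + r % p - k < p := by omega
    have hpos : 0 < r - k := by omega
    rw [Nat.digits_def' hp.one_lt hpos]
    have hm : (r - k) % p = p + r % p - k := by
      rw [he, Nat.mul_add_mod, Nat.mod_eq_of_lt hlt]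
    have hd : (r - k) / p = r / p - 1 := by
      rw [he, Nat.mul_add_div (by omega), Nat.div_eq_of_lt hlt, Nat.add_zero]
    rw [hm, hd, List.sum_cons]
  rw [key j hj1 (by omega), key i h0 hi2]
  omega
end

section
/- Let 1 ≤ i ≤ p-1 and p ≤ r with base-p expansion r = r_m p^m + ... + r_1 p + r_0, and suppose r_0 < i. If Σ_p(r-i) ≤ p-1, then r_1 ≠ 0, Σ_p(r-i) = Σ_p(r) + p - 1 - i, and Σ_p(r) ≥ r_0 + 1. -/
lemma rep_mod (p a b m : ℕ) (h : m = p * a + b) (hb : b < p) : m % p = b := by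
  subst h; rw [Nat.mul_add_mod]; exact Nat.mod_eq_of_lt hb

lemma rep_div (p a b m : ℕ) (h : m = p * a + b) (hb : b < p) (hp : 0 < p) :
    m / p = a := by
  subst h; rw [Nat.mul_add_div hp, Nat.div_eq_of_lt hb, Nat.add_zero]

/-- Digit-sum of `q - 1` when the last digit of `q` is nonzero. -/
lemma sum_digits_sub_one (p q : ℕ) (hp : 1 < p) (hq : q % p ≠ 0) :
    (Nat.digits p (q - 1)).sum + 1 = (Nat.digits p q).sum := by
  have hq0 : q ≠ 0 := by rintro rfl; simp at hq
  have hmod : 1 ≤ q % p := Nat.one_le_iff_ne_zero.mpr hq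
  have hmlt : q % p < p := Nat.mod_lt _ (by omega)
  have hdq : p * (q / p) + q % p = q := Nat.div_add_mod q p
  rcases eq_or_ne q 1 with rfl | hq1
  · rw [Nat.digits_def' hp Nat.one_pos]
    simp [Nat.div_eq_of_lt hp, Nat.mod_eq_of_lt hp]
  · have hq1' : 0 < q - 1 := by omega
    have hsub : q - 1 = p * (q / p) + (q % p - 1) := by omega
    rw [Nat.digits_def' hp hq1', Nat.digits_def' hp (Nat.pos_of_ne_zero hq0),
        List.sum_cons, List.sum_cons,
        rep_mod p (q / p) (q % p - 1) _ hsub (by omega),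
        rep_div p (q / p) (q % p - 1) _ hsub (by omega) (by omega)]
    omega

/-- If `1 ≤ i ≤ p-1`, `p ≤ r`, `r_0 = r % p < i` and `Σ_p(r-i) ≤ p-1`, then the linear digit
`r_1 = r / p % p` is nonzero, `Σ_p(r-i) = Σ_p(r) + p - 1 - i`, and `Σ_p(r) ≥ r_0 + 1`. -/
theorem stmt_6 (p r i : ℕ) (hp : p.Prime) (hi1 : 1 ≤ i) (hi2 : i ≤ p - 1)
    (hr : p ≤ r) (h0 : r % p < i) (hS : (Nat.digits p (r - i)).sum ≤ p - 1) :
    r / p % p ≠ 0 ∧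
    (Nat.digits p (r - i)).sum = (Nat.digits p r).sum + (p - 1 - i) ∧
    r % p + 1 ≤ (Nat.digits p r).sum := by
  have hp1 : 1 < p := hp.one_lt
  set q := r / p with hq
  set r0 := r % p with hr0
  have hdr : p * q + r0 = r := Nat.div_add_mod r p
  have hq1 : 1 ≤ q := Nat.one_le_div_iff (by omega) |>.mpr hr
  have hip : i < p := by omega
  have hpq : p ≤ p * q := Nat.le_mul_of_pos_right p (by omega)
  set d := p - i + r0 with hd
  have hdlt : d < p := by omega
  have hmul : p * (q - 1) = p * q - p := by rw [Nat.mul_sub, Nat.mul_one]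
  have hri : r - i = p * (q - 1) + d := by omega
  have hri0 : 0 < r - i := by omega
  have hSri : (Nat.digits p (r - i)).sum = d + (Nat.digits p (q - 1)).sum := by
    rw [Nat.digits_def' hp1 hri0, List.sum_cons,
        rep_mod p (q - 1) d _ hri hdlt, rep_div p (q - 1) d _ hri hdlt (by omega)]
  have hSr : (Nat.digits p r).sum = r0 + (Nat.digits p q).sum := by
    rw [Nat.digits_def' hp1 (show 0 < r by omega), List.sum_cons]
  have hqp : q % p ≠ 0 := by
    intro hz
    have hdq : p * (q / p) + q % p = q := Nat.div_add_mod q p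
    have hqp' : p ≤ q := by
      rcases Nat.lt_or_ge q p with h | h
      · rw [Nat.mod_eq_of_lt h] at hz; omega
      · exact h
    have h1p : 1 ≤ q / p := Nat.one_le_div_iff (by omega) |>.mpr hqp'
    have hmul2 : p * (q / p - 1) = p * (q / p) - p := by rw [Nat.mul_sub, Nat.mul_one]
    have hpq2 : p ≤ p * (q / p) := Nat.le_mul_of_pos_right p (by omega)
    have hsub : q - 1 = p * (q / p - 1) + (p - 1) := by omega
    have hge : p - 1 ≤ (Nat.digits p (q - 1)).sum := by
      rw [Nat.digits_def' hp1 (show 0 < q - 1 by omega), List.sum_cons,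
          rep_mod p (q / p - 1) (p - 1) _ hsub (by omega)]
      omega
    omega
  have hkey := sum_digits_sub_one p q hp1 hqp
  exact ⟨hqp, by omega, by omega⟩
end

section
/- Let r > p, 1 ≤ m ≤ p, and let F(X,Y) = ∑_{j=0}^{r} a_j X^{r-j}Y^j be a homogeneous polynomial of degree r over F_p. Then θ^m divides F in F_p[X,Y], where θ = X^p Y - X Y^p, if and only if: (i) a_j ≠ 0 implies m ≤ j ≤ r - m, and (ii) for all 0 ≤ i ≤ m-1 and all 1 ≤ l ≤ p-1, ∑_{j ≡ l mod (p-1)} C(j,i)·a_j = 0 in F_p. -/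
open MvPolynomial Finset
set_option linter.unusedVariables false
set_option linter.unnecessarySimpa false
set_option linter.unnecessarySeqFocus false

variable {p : ℕ} [Fact p.Prime]

local notation "R" => ZMod p
local notation "S" => MvPolynomial (Fin 2) (ZMod p)

/-- exponent of the monomial `X0^(r-j) X1^j` -/
noncomputable def ee (r j : ℕ) : Fin 2 →₀ ℕ := Finsupp.single 0 (r - j) + Finsupp.single 1 j

lemma ee_apply0 (r j : ℕ) : ee r j 0 = r - j := by simp [ee]
lemma ee_apply1 (r j : ℕ) : ee r j 1 = j := by simp [ee]

lemma ee_inj {r : ℕ} : ∀ {j j'}, ee r j = ee r j' → j = j' := by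
  intro j j' h
  have := congrArg (fun f => f 1) h
  simpa [ee_apply1] using this

lemma mono_eq (s t : ℕ) (b : R) :
    C b * (X 0 : S) ^ s * X 1 ^ t = monomial (Finsupp.single 0 s + Finsupp.single 1 t) b := by
  rw [C_apply, X_pow_eq_monomial, X_pow_eq_monomial, monomial_mul, monomial_mul]
  simp

lemma X1_pow_dvd_iff {r m : ℕ} (b : ℕ → R) (hm : m ≤ r) :
    (X 1 : S) ^ m ∣ (∑ j ∈ range (r + 1), monomial (ee r j) (b j)) ↔
      ∀ j ≤ r, j < m → b j = 0 := by
  constructor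
  · rintro ⟨Q, hQ⟩ j hj hjm
    have hc : coeff (ee r j) (∑ j ∈ range (r + 1), monomial (ee r j) (b j)) = b j := by
      rw [coeff_sum]
      rw [Finset.sum_eq_single j]
      · simp [coeff_monomial]
      · intro k _ hk
        rw [coeff_monomial, if_neg (fun h => hk (ee_inj h))]
      · intro h; exact absurd (mem_range.2 (Nat.lt_succ_of_le hj)) h
    rw [hQ] at hc
    rw [X_pow_eq_monomial, coeff_monomial_mul'] at hc
    rw [if_neg] at hc
    · exact hc.symm
    · rw [Finsupp.single_le_iff, ee_apply1]
      omega
  · intro h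
    apply Finset.dvd_sum
    intro j hj
    rw [mem_range] at hj
    by_cases hjm : j < m
    · rw [h j (by omega) hjm, monomial_zero]
      exact dvd_zero _
    · push_neg at hjm
      refine ⟨monomial (Finsupp.single 0 (r - j) + Finsupp.single 1 (j - m)) (b j), ?_⟩
      rw [X_pow_eq_monomial, monomial_mul, one_mul]
      congr 1
      have h1 : Finsupp.single (1 : Fin 2) j = Finsupp.single 1 m + Finsupp.single 1 (j - m) := by
        rw [← Finsupp.single_add]; congr 1; omega
      rw [ee, h1]; abel

lemma X0_pow_dvd_iff {r m : ℕ} (b : ℕ → R) (hm : m ≤ r) :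
    (X 0 : S) ^ m ∣ (∑ j ∈ range (r + 1), monomial (ee r j) (b j)) ↔
      ∀ j ≤ r, r - j < m → b j = 0 := by
  constructor
  · rintro ⟨Q, hQ⟩ j hj hjm
    have hc : coeff (ee r j) (∑ j ∈ range (r + 1), monomial (ee r j) (b j)) = b j := by
      rw [coeff_sum]
      rw [Finset.sum_eq_single j]
      · simp [coeff_monomial]
      · intro k _ hk
        rw [coeff_monomial, if_neg (fun h => hk (ee_inj h))]
      · intro h; exact absurd (mem_range.2 (Nat.lt_succ_of_le hj)) h
    rw [hQ] at hc
    rw [X_pow_eq_monomial, coeff_monomial_mul'] at hc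
    rw [if_neg] at hc
    · exact hc.symm
    · rw [Finsupp.single_le_iff, ee_apply0]
      omega
  · intro h
    apply Finset.dvd_sum
    intro j hj
    rw [mem_range] at hj
    by_cases hjm : r - j < m
    · rw [h j (by omega) hjm, monomial_zero]
      exact dvd_zero _
    · push_neg at hjm
      refine ⟨monomial (Finsupp.single 0 (r - j - m) + Finsupp.single 1 j) (b j), ?_⟩
      rw [X_pow_eq_monomial, monomial_mul, one_mul]
      congr 1
      have h1 : Finsupp.single (0 : Fin 2) (r - j) = Finsupp.single 0 m + Finsupp.single 0 (r - j - m) := by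
        rw [← Finsupp.single_add]; congr 1; omega
      rw [ee, h1]; abel

/-- the automorphism `X0 ↦ X0`, `X1 ↦ X1 + b X0`. -/
noncomputable def tauHom (b : R) : S →ₐ[R] S :=
  aeval ![X 0, X 1 + C b * X 0]

lemma tauHom_X0 (b : R) : tauHom b (X 0) = X 0 := by simp [tauHom]
lemma tauHom_X1 (b : R) : tauHom b (X 1) = X 1 + C b * X 0 := by simp [tauHom]
lemma tauHom_C (b c : R) : tauHom b (C c) = C c := by simp [tauHom, algebraMap_eq]

lemma tauHom_comp (b b' : R) : (tauHom b).comp (tauHom b') = tauHom (b + b') := by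
  apply MvPolynomial.algHom_ext
  intro i
  fin_cases i <;>
    simp [tauHom, map_add, map_mul, algebraMap_eq, C_add, add_mul] <;> ring

noncomputable def tau (b : R) : S ≃ₐ[R] S :=
  AlgEquiv.ofAlgHom (tauHom b) (tauHom (-b))
    (by rw [tauHom_comp]; simp [tauHom]; apply MvPolynomial.algHom_ext; intro i;
        fin_cases i <;> simp [algebraMap_eq])
    (by rw [tauHom_comp]; simp [tauHom]; apply MvPolynomial.algHom_ext; intro i;
        fin_cases i <;> simp [algebraMap_eq])

lemma tau_apply (b : R) (f : S) : tau b f = tauHom b f := rfl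

lemma prime_X0 : Prime (X 0 : S) := by
  rw [← MulEquiv.prime_iff (finSuccEquiv R 1).toMulEquiv]
  have : (finSuccEquiv R 1) (X 0) = Polynomial.X := finSuccEquiv_X_zero
  rw [show ((finSuccEquiv R 1).toMulEquiv (X 0)) = Polynomial.X from this]
  exact Polynomial.prime_X

lemma prime_X1 : Prime (X 1 : S) := by
  have h := (MulEquiv.prime_iff (p := (X 0 : S)) (renameEquiv R (Equiv.swap (0 : Fin 2) 1)).toMulEquiv).symm
  rw [show ((renameEquiv R (Equiv.swap (0 : Fin 2) 1)).toMulEquiv (X 0 : S)) = X 1 by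
    simp [renameEquiv_apply, rename_X]] at h
  exact h.mp prime_X0

/-- `M b = X1 - b X0` is prime. -/
lemma prime_M (b : R) : Prime ((X 1 : S) - C b * X 0) := by
  have h := (MulEquiv.prime_iff (p := (X 1 : S)) (tau (-b)).toMulEquiv).symm
  rw [show ((tau (-b)).toMulEquiv (X 1 : S)) = X 1 - C b * X 0 by
    show tau (-b) (X 1) = _
    rw [tau_apply, tauHom_X1]; push_cast [map_neg]; ring] at h
  exact h.mp prime_X1

lemma prod_X_sub_C_zmod : ∏ c : ZMod p, (Polynomial.X - Polynomial.C c) =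
    Polynomial.X ^ p - Polynomial.X := by
  classical
  have hcard : Fintype.card (ZMod p) = p := ZMod.card p
  have h1 : (Polynomial.X ^ p - Polynomial.X : Polynomial (ZMod p)).Monic := by
    apply Polynomial.monic_X_pow_sub
    rw [Polynomial.degree_X]
    exact_mod_cast (Fact.out : p.Prime).one_lt
  have h2 := FiniteField.roots_X_pow_card_sub_X (ZMod p)
  rw [hcard] at h2
  have h3 : (Polynomial.X ^ p - Polynomial.X : Polynomial (ZMod p)).natDegree = p := by
    have := FiniteField.X_pow_card_sub_X_natDegree_eq (ZMod p) (Fact.out : p.Prime).one_lt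
    simpa [hcard] using this
  have h4 := Polynomial.prod_multiset_X_sub_C_of_monic_of_roots_card_eq h1
    (by rw [h2, h3]; simpa using hcard)
  rw [h2] at h4
  rw [← h4]
  rfl

lemma prod_sub_eq (K : Type) [Field K] [Algebra (ZMod p) K] (t : K) :
    ∏ c : ZMod p, (t - algebraMap (ZMod p) K c) = t ^ p - t := by
  have h := congrArg (fun q => Polynomial.eval₂ (algebraMap (ZMod p) K) t q)
    (prod_X_sub_C_zmod (p := p))
  simpa [Polynomial.eval₂_finset_prod] using h

lemma theta_factor :
    (X 0 : S) ^ p * X 1 - X 0 * X 1 ^ p = X 1 * ∏ c : ZMod p, (X 0 - C c * X 1) := by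
  classical
  set K := AlgebraicClosure (ZMod p)
  have hinj : Function.Injective (algebraMap (ZMod p) K) := (algebraMap (ZMod p) K).injective
  apply MvPolynomial.map_injective (algebraMap (ZMod p) K) hinj
  apply MvPolynomial.funext
  intro v
  simp only [map_sub, map_mul, map_pow, map_prod, map_X, map_C, eval_sub, eval_mul, eval_pow,
    eval_X, eval_C, eval_prod]
  by_cases hv : v 1 = 0
  · simp [hv, zero_pow (Fact.out : p.Prime).ne_zero]
  · have ht : v 0 = (v 0 / v 1) * v 1 := (div_mul_cancel₀ _ hv).symm
    rw [ht]
    set t := v 0 / v 1 with htdef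
    have h1 : ∏ c : ZMod p, (t * v 1 - algebraMap (ZMod p) K c * v 1) =
        ∏ c : ZMod p, ((t - algebraMap (ZMod p) K c) * v 1) :=
      Finset.prod_congr rfl fun c _ => by ring
    rw [h1, Finset.prod_mul_distrib, Finset.prod_const, Finset.card_univ, ZMod.card,
      prod_sub_eq]
    ring

/-- splitting of divisibility by a power of a product of pairwise non-associated primes -/
lemma prod_pow_dvd_iff {ι : Type*} [DecidableEq ι] (s : Finset ι) (f : ι → S) (m : ℕ)
    (hf : ∀ i ∈ s, Prime (f i)) (hpair : ∀ i ∈ s, ∀ j ∈ s, i ≠ j → ¬ f i ∣ f j) (F : S) :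
    (∏ i ∈ s, f i) ^ m ∣ F ↔ ∀ i ∈ s, f i ^ m ∣ F := by
  classical
  induction s using Finset.induction_on with
  | empty => simp
  | @insert a s ha ih =>
    rw [Finset.prod_insert ha, mul_pow]
    constructor
    · intro h i hi
      rcases Finset.mem_insert.mp hi with rfl | hi
      · exact dvd_trans (dvd_mul_right _ _) h
      · have h2 : (∏ j ∈ s, f j) ^ m ∣ F := dvd_trans (dvd_mul_left _ _) h
        exact (ih (fun j hj => hf j (Finset.mem_insert_of_mem hj))
          (fun j hj k hk hjk => hpair j (Finset.mem_insert_of_mem hj) k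
            (Finset.mem_insert_of_mem hk) hjk) |>.mp h2) i hi
    · intro h
      have hs : (∏ j ∈ s, f j) ^ m ∣ F :=
        (ih (fun j hj => hf j (Finset.mem_insert_of_mem hj))
          (fun j hj k hk hjk => hpair j (Finset.mem_insert_of_mem hj) k
            (Finset.mem_insert_of_mem hk) hjk)).mpr
          (fun i hi => h i (Finset.mem_insert_of_mem hi))
      obtain ⟨G, hG⟩ := hs
      have hfa : f a ^ m ∣ F := h a (Finset.mem_insert_self a s)
      rw [hG] at hfa
      have hprime : Prime (f a) := hf a (Finset.mem_insert_self a s)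
      have hnd : ¬ f a ∣ (∏ j ∈ s, f j) ^ m := by
        intro hd
        have := hprime.dvd_of_dvd_pow hd
        obtain ⟨j, hj, hdj⟩ := (hprime.dvd_finset_prod_iff _).mp this
        exact hpair a (Finset.mem_insert_self a s) j (Finset.mem_insert_of_mem hj)
          (fun h => ha (h ▸ hj)) hdj
      have hG2 : f a ^ m ∣ G := hprime.pow_dvd_of_dvd_mul_left m hnd hfa
      obtain ⟨H, hH⟩ := hG2
      exact ⟨H, by rw [hG, hH]; ring⟩

/-- the automorphism `X0 ↦ X0 + b X1`, `X1 ↦ X1`. -/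
noncomputable def sigHom (b : R) : S →ₐ[R] S :=
  aeval ![X 0 + C b * X 1, X 1]

lemma sigHom_comp (b b' : R) : (sigHom b).comp (sigHom b') = sigHom (b + b') := by
  apply MvPolynomial.algHom_ext
  intro i
  fin_cases i <;>
    simp [sigHom, map_add, map_mul, algebraMap_eq, C_add, add_mul] <;> ring

noncomputable def sig (b : R) : S ≃ₐ[R] S :=
  AlgEquiv.ofAlgHom (sigHom b) (sigHom (-b))
    (by rw [sigHom_comp]; simp [sigHom]; apply MvPolynomial.algHom_ext; intro i;
        fin_cases i <;> simp [algebraMap_eq])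
    (by rw [sigHom_comp]; simp [sigHom]; apply MvPolynomial.algHom_ext; intro i;
        fin_cases i <;> simp [algebraMap_eq])

lemma prime_L (c : R) : Prime ((X 0 : S) - C c * X 1) := by
  have h := (MulEquiv.prime_iff (p := (X 0 : S)) (sig (-c)).toMulEquiv).symm
  rw [show ((sig (-c)).toMulEquiv (X 0 : S)) = X 0 - C c * X 1 by
    show sig (-c) (X 0) = _
    show sigHom (-c) (X 0) = _
    simp [sigHom]; push_cast [map_neg]; ring] at h
  exact h.mp prime_X0

lemma not_dvd_of_eval {q q' : S} (v : Fin 2 → R) (h0 : eval v q = 0) (h1 : eval v q' ≠ 0) :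
    ¬ q ∣ q' := by
  rintro ⟨k, rfl⟩
  rw [map_mul, h0, zero_mul] at h1
  exact h1 rfl

lemma theta_pow_dvd_iff (m : ℕ) (F : S) :
    ((X 0 : S) ^ p * X 1 - X 0 * X 1 ^ p) ^ m ∣ F ↔
      ((X 1 : S) ^ m ∣ F ∧ ∀ c : ZMod p, ((X 0 : S) - C c * X 1) ^ m ∣ F) := by
  classical
  have hθ : (X 0 : S) ^ p * X 1 - X 0 * X 1 ^ p =
      ∏ i : Option (ZMod p), (Option.elim i (X 1 : S) (fun c => X 0 - C c * X 1)) := by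
    rw [Fintype.prod_option]
    exact theta_factor
  rw [hθ, prod_pow_dvd_iff]
  · constructor
    · intro h
      exact ⟨h none (Finset.mem_univ _), fun c => h (some c) (Finset.mem_univ _)⟩
    · rintro ⟨h1, h2⟩ i _
      cases i with
      | none => exact h1
      | some c => exact h2 c
  · rintro i -
    cases i with
    | none => exact prime_X1
    | some c => exact prime_L c
  · rintro i - j - hij
    cases i with
    | none =>
      cases j with
      | none => exact absurd rfl hij
      | some d =>
        apply not_dvd_of_eval ![1, 0] <;> simp
    | some c =>
      cases j with
      | none =>
        apply not_dvd_of_eval ![c, 1] <;> simp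
      | some d =>
        have hcd : c ≠ d := fun h => hij (by rw [h])
        apply not_dvd_of_eval ![c, 1]
        · simp
        · simpa [sub_ne_zero] using hcd

lemma expand_term (r j : ℕ) (hj : j ≤ r) (b aj : R) :
    C aj * (X 0 : S) ^ (r - j) * (X 1 + C b * X 0) ^ j
      = ∑ i ∈ range (r + 1), monomial (ee r i) ((j.choose i : R) * b ^ (j - i) * aj) := by
  rw [add_pow, Finset.mul_sum]
  have hstep : ∀ i ∈ range (j + 1),
      C aj * (X 0 : S) ^ (r - j) * ((X 1 : S) ^ i * (C b * X 0) ^ (j - i) * (j.choose i : S))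
        = monomial (ee r i) ((j.choose i : R) * b ^ (j - i) * aj) := by
    intro i hi
    rw [mem_range, Nat.lt_succ_iff] at hi
    have e1 : C aj * (X 0 : S) ^ (r - j) * ((X 1 : S) ^ i * (C b * X 0) ^ (j - i) * (j.choose i : S))
        = C ((j.choose i : R) * b ^ (j - i) * aj) * X 0 ^ (r - i) * X 1 ^ i := by
      rw [mul_pow, ← C_pow, show ((j.choose i : ℕ) : S) = C ((j.choose i : ℕ) : R) from
        (map_natCast (C : R →+* S) _).symm]
      rw [show r - i = (r - j) + (j - i) by omega, pow_add, map_mul, map_mul]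
      ring
    rw [e1, mono_eq, ee]
  rw [Finset.sum_congr rfl hstep]
  apply Finset.sum_subset (Finset.range_subset_range.mpr (by omega))
  intro i _ hi
  rw [mem_range, Nat.lt_succ_iff, not_le] at hi
  rw [Nat.choose_eq_zero_of_lt hi]
  simp


lemma tauHom_F (r : ℕ) (a : ℕ → R) (b : R) :
    tauHom b (∑ j ∈ range (r + 1), C (a j) * (X 0 : S) ^ (r - j) * X 1 ^ j)
      = ∑ i ∈ range (r + 1), monomial (ee r i)
          (∑ j ∈ range (r + 1), (j.choose i : R) * b ^ (j - i) * a j) := by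
  rw [map_sum]
  have hstep : ∀ j ∈ range (r + 1),
      tauHom b (C (a j) * (X 0 : S) ^ (r - j) * X 1 ^ j)
        = ∑ i ∈ range (r + 1), monomial (ee r i) ((j.choose i : R) * b ^ (j - i) * (a j)) := by
    intro j hj
    rw [mem_range, Nat.lt_succ_iff] at hj
    rw [map_mul, map_mul, map_pow, map_pow, tauHom_X0, tauHom_X1, tauHom_C]
    exact expand_term r j hj b (a j)
  rw [Finset.sum_congr rfl hstep, Finset.sum_comm]
  exact Finset.sum_congr rfl fun i _ => (map_sum (monomial (ee r i)) _ _).symm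

lemma vandermonde (b : ℕ → R) :
    (∀ u : R, u ≠ 0 → ∑ l ∈ range (p - 1), b l * u ^ l = 0) ↔ ∀ l < p - 1, b l = 0 := by
  have hp2 : 2 ≤ p := (Fact.out : p.Prime).two_le
  constructor
  · intro h l hl
    set P : Polynomial R := ∑ l ∈ range (p - 1), Polynomial.C (b l) * Polynomial.X ^ l with hP
    have heval : ∀ u : R, u ≠ 0 → P.eval u = 0 := by
      intro u hu
      rw [hP]
      simpa [Polynomial.eval_finset_sum] using h u hu
    have hdeg : P.natDegree < p - 1 := by
      have : P.natDegree ≤ p - 2 := by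
        apply Polynomial.natDegree_sum_le_of_forall_le
        intro l hl
        rw [mem_range] at hl
        calc (Polynomial.C (b l) * Polynomial.X ^ l).natDegree
            ≤ l := le_trans (Polynomial.natDegree_C_mul_le (b l) (Polynomial.X ^ l))
              (by simp)
          _ ≤ p - 2 := by omega
      omega
    have hcard : (Finset.univ.erase (0 : R)).card = p - 1 := by
      rw [Finset.card_erase_of_mem (Finset.mem_univ _), Finset.card_univ, ZMod.card]
    have hP0 : P = 0 := by
      apply Polynomial.eq_zero_of_natDegree_lt_card_of_eval_eq_zero' P (Finset.univ.erase 0)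
      · intro u hu
        exact heval u (Finset.ne_of_mem_erase hu)
      · rw [hcard]; exact hdeg
    have : P.coeff l = b l := by
      rw [hP, Polynomial.finset_sum_coeff]
      rw [Finset.sum_eq_single l]
      · simp
      · intro k hk hkl
        simp [Polynomial.coeff_C_mul, Polynomial.coeff_X_pow, hkl, Ne.symm hkl]
      · intro h; exact absurd (mem_range.2 hl) h
    rw [hP0] at this
    simpa using this.symm
  · intro h u hu
    apply Finset.sum_eq_zero
    intro l hl
    rw [h l (mem_range.mp hl), zero_mul]

lemma group_residues (r : ℕ) (t : ℕ → R) (u : R) (hu : u ≠ 0) :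
    ∑ j ∈ range (r + 1), t j * u ^ j
      = ∑ l ∈ range (p - 1),
          (∑ j ∈ (range (r + 1)).filter (fun j => j % (p - 1) = l), t j) * u ^ l := by
  have hp2 : 2 ≤ p := (Fact.out : p.Prime).two_le
  have hmaps : ∀ j ∈ range (r + 1), j % (p - 1) ∈ range (p - 1) :=
    fun j _ => mem_range.2 (Nat.mod_lt _ (by omega))
  rw [← Finset.sum_fiberwise_of_maps_to hmaps (fun j => t j * u ^ j)]
  apply Finset.sum_congr rfl
  intro l hl
  rw [Finset.sum_mul]
  apply Finset.sum_congr rfl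
  intro j hj
  rw [Finset.mem_filter] at hj
  congr 1
  conv_lhs => rw [← Nat.div_add_mod j (p - 1)]
  rw [pow_add, pow_mul, ZMod.pow_card_sub_one_eq_one hu, one_pow, one_mul, hj.2]

lemma comb (r i : ℕ) (a : ℕ → R) :
    (∀ c : R, c ≠ 0 → ∑ j ∈ range (r + 1), (j.choose i : R) * (c⁻¹) ^ (j - i) * a j = 0) ↔
      (∀ l < p - 1, ∑ j ∈ (range (r + 1)).filter (fun j => j % (p - 1) = l),
          (j.choose i : R) * a j = 0) := by
  have h1 : (∀ c : R, c ≠ 0 → ∑ j ∈ range (r + 1), (j.choose i : R) * (c⁻¹) ^ (j - i) * a j = 0)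
      ↔ (∀ u : R, u ≠ 0 → ∑ j ∈ range (r + 1), (j.choose i : R) * u ^ (j - i) * a j = 0) := by
    constructor
    · intro h u hu; have := h u⁻¹ (inv_ne_zero hu); rwa [inv_inv] at this
    · intro h c hc; exact h _ (inv_ne_zero hc)
  rw [h1]
  have h2 : ∀ u : R, u ≠ 0 →
      ((∑ j ∈ range (r + 1), (j.choose i : R) * u ^ (j - i) * a j = 0)
        ↔ ∑ j ∈ range (r + 1), ((j.choose i : R) * a j) * u ^ j = 0) := by
    intro u hu
    have key : ∑ j ∈ range (r + 1), ((j.choose i : R) * a j) * u ^ j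
        = u ^ i * ∑ j ∈ range (r + 1), (j.choose i : R) * u ^ (j - i) * a j := by
      rw [Finset.mul_sum]
      apply Finset.sum_congr rfl
      intro j _
      by_cases hij : i ≤ j
      · have hj : j = i + (j - i) := by omega
        calc ((j.choose i : R) * a j) * u ^ j
            = (j.choose i : R) * a j * u ^ (i + (j - i)) := by rw [← hj]
          _ = u ^ i * ((j.choose i : R) * u ^ (j - i) * a j) := by rw [pow_add]; ring
      · rw [Nat.choose_eq_zero_of_lt (by omega)]; simp
    constructor
    · intro h; rw [key, h, mul_zero]
    · intro h
      rw [key] at h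
      rcases mul_eq_zero.mp h with h' | h'
      · exact absurd h' (pow_ne_zero _ hu)
      · exact h'
  have h3 : (∀ u : R, u ≠ 0 → ∑ j ∈ range (r + 1), (j.choose i : R) * u ^ (j - i) * a j = 0)
      ↔ (∀ u : R, u ≠ 0 → ∑ j ∈ range (r + 1), ((j.choose i : R) * a j) * u ^ j = 0) :=
    forall_congr' fun u => imp_congr_right fun hu => h2 u hu
  rw [h3]
  have h4 : (∀ u : R, u ≠ 0 → ∑ j ∈ range (r + 1), ((j.choose i : R) * a j) * u ^ j = 0)
      ↔ (∀ u : R, u ≠ 0 → ∑ l ∈ range (p - 1),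
          (∑ j ∈ (range (r + 1)).filter (fun j => j % (p - 1) = l),
            (j.choose i : R) * a j) * u ^ l = 0) :=
    forall_congr' fun u => imp_congr_right fun hu => by
      rw [group_residues r (fun j => (j.choose i : R) * a j) u hu]
  rw [h4]
  exact vandermonde _

lemma F_as_monomials (r : ℕ) (a : ℕ → R) :
    (∑ j ∈ range (r + 1), C (a j) * (X 0 : S) ^ (r - j) * X 1 ^ j)
      = ∑ j ∈ range (r + 1), monomial (ee r j) (a j) :=
  Finset.sum_congr rfl fun j _ => by rw [mono_eq, ee]

lemma Lc_crit (r m : ℕ) (hmr : m ≤ r) (a : ℕ → R) (c : R) (hc : c ≠ 0) :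
    ((X 0 : S) - C c * X 1) ^ m ∣ (∑ j ∈ range (r + 1), C (a j) * (X 0 : S) ^ (r - j) * X 1 ^ j) ↔
      ∀ i ≤ r, i < m →
        ∑ j ∈ range (r + 1), (j.choose i : R) * (c⁻¹) ^ (j - i) * a j = 0 := by
  have hL : (X 0 : S) - C c * X 1 = C (-c) * (X 1 - C c⁻¹ * X 0) := by
    have h1 : (C c : S) * C c⁻¹ = 1 := by rw [← map_mul, mul_inv_cancel₀ hc, map_one]
    calc (X 0 : S) - C c * X 1 = (C c * C c⁻¹) * X 0 - C c * X 1 := by rw [h1]; ring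
      _ = C (-c) * (X 1 - C c⁻¹ * X 0) := by rw [map_neg]; ring
  rw [hL, mul_pow, IsUnit.mul_left_dvd
    (((isUnit_iff_ne_zero.mpr (neg_ne_zero.mpr hc)).map C).pow m)]
  have ht : tau c⁻¹ ((X 1 - C c⁻¹ * X 0 : S) ^ m) = X 1 ^ m := by
    rw [map_pow]
    congr 1
    show tauHom c⁻¹ _ = _
    rw [map_sub, tauHom_X1, map_mul, tauHom_C, tauHom_X0]
    ring
  calc (X 1 - C c⁻¹ * X 0 : S) ^ m ∣ _
      ↔ tau c⁻¹ ((X 1 - C c⁻¹ * X 0 : S) ^ m) ∣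
          tau c⁻¹ (∑ j ∈ range (r + 1), C (a j) * (X 0 : S) ^ (r - j) * X 1 ^ j) :=
        (map_dvd_iff _).symm
    _ ↔ (X 1 : S) ^ m ∣ ∑ i ∈ range (r + 1), monomial (ee r i)
          (∑ j ∈ range (r + 1), (j.choose i : R) * (c⁻¹) ^ (j - i) * a j) := by
        rw [ht, tau_apply, tauHom_F r a c⁻¹]
    _ ↔ _ := X1_pow_dvd_iff _ hmr

/-- Divisibility criterion by `θ^m`, `θ = X^pY - XY^p`: for `r > p`, `1 ≤ m ≤ p` and
`F = ∑_{j=0}^r a_j X^{r-j}Y^j`, `θ^m ∣ F` iff (i) `a_j ≠ 0 → m ≤ j ≤ r-m` and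
(ii) `∑_{j ≡ l mod (p-1)} C(j,i) a_j = 0` for all `0 ≤ i ≤ m-1`, `1 ≤ l ≤ p-1`. -/
theorem stmt_7 (p r m : ℕ) [Fact p.Prime] (hr : p < r) (hm1 : 1 ≤ m) (hm2 : m ≤ p)
    (a : ℕ → ZMod p) :
    (((X 0 : MvPolynomial (Fin 2) (ZMod p)) ^ p * X 1 - X 0 * X 1 ^ p) ^ m ∣
        ∑ j ∈ Finset.range (r + 1), C (a j) * X 0 ^ (r - j) * X 1 ^ j) ↔
      ((∀ j ≤ r, a j ≠ 0 → m ≤ j ∧ j ≤ r - m) ∧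
        ∀ i < m, ∀ l, 1 ≤ l → l ≤ p - 1 →
          (∑ j ∈ Finset.range (r + 1),
              if j % (p - 1) = l % (p - 1) then (j.choose i : ZMod p) * a j else 0) = 0) := by
  have hp2 : 2 ≤ p := (Fact.out : p.Prime).two_le
  have hmr : m ≤ r := by omega
  rw [theta_pow_dvd_iff]
  have c1 : (X 1 : MvPolynomial (Fin 2) (ZMod p)) ^ m ∣
      (∑ j ∈ range (r + 1), C (a j) * (X 0 : MvPolynomial (Fin 2) (ZMod p)) ^ (r - j) * X 1 ^ j)
      ↔ ∀ j ≤ r, j < m → a j = 0 := by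
    rw [F_as_monomials]
    exact X1_pow_dvd_iff a hmr
  have c2 : (X 0 : MvPolynomial (Fin 2) (ZMod p)) ^ m ∣
      (∑ j ∈ range (r + 1), C (a j) * (X 0 : MvPolynomial (Fin 2) (ZMod p)) ^ (r - j) * X 1 ^ j)
      ↔ ∀ j ≤ r, r - j < m → a j = 0 := by
    rw [F_as_monomials]
    exact X0_pow_dvd_iff a hmr
  have c3 : (∀ c : ZMod p, ((X 0 : MvPolynomial (Fin 2) (ZMod p)) - C c * X 1) ^ m ∣
      (∑ j ∈ range (r + 1), C (a j) * (X 0 : MvPolynomial (Fin 2) (ZMod p)) ^ (r - j) * X 1 ^ j))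
      ↔ (((X 0 : MvPolynomial (Fin 2) (ZMod p)) ^ m ∣
          (∑ j ∈ range (r + 1), C (a j) * (X 0 : MvPolynomial (Fin 2) (ZMod p)) ^ (r - j) * X 1 ^ j)) ∧
        (∀ i < m, ∀ l < p - 1, ∑ j ∈ (range (r + 1)).filter (fun j => j % (p - 1) = l),
            (j.choose i : ZMod p) * a j = 0)) := by
    constructor
    · intro h
      constructor
      · have := h 0
        simpa using this
      · intro i hi
        refine (comb r i a).mp ?_
        intro c hc
        exact ((Lc_crit r m hmr a c hc).mp (h c)) i (by omega) hi
    · rintro ⟨h0, h⟩ c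
      by_cases hc : c = 0
      · subst hc
        simpa using h0
      · refine (Lc_crit r m hmr a c hc).mpr ?_
        intro i hir him
        exact (comb r i a).mpr (h i him) c hc
  rw [c1, c3, c2]
  constructor
  · rintro ⟨h1, h2, h3⟩
    constructor
    · intro j hj hne
      constructor
      · by_contra hlt
        exact hne (h1 j hj (by omega))
      · by_contra hlt
        exact hne (h2 j hj (by omega))
    · intro i hi l hl1 hl2
      rw [← Finset.sum_filter]
      exact h3 i hi (l % (p - 1)) (Nat.mod_lt _ (by omega))
  · rintro ⟨h1, h2⟩
    refine ⟨?_, ?_, ?_⟩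
    · intro j hj hjm
      by_contra hne
      exact absurd ((h1 j hj hne).1) (by omega)
    · intro j hj hjm
      by_contra hne
      exact absurd ((h1 j hj hne).2) (by omega)
    · intro i hi l hl
      by_cases hl0 : l = 0
      · have := h2 i hi (p - 1) (by omega) le_rfl
        rw [← Finset.sum_filter] at this
        rw [hl0]
        simpa [Nat.mod_self] using this
      · have := h2 i hi l (by omega) (by omega)
        rw [← Finset.sum_filter] at this
        rwa [Nat.mod_eq_of_lt hl] at this
end

section
/- Let 0 ≤ i ≤ j ≤ a ≤ p-1. Then the (i+1)×(i+1) matrix whose (m,n)-entry, for 0 ≤ m,n ≤ i, is the binomial coefficient C(a-n, j-m) reduced modulo p, is invertible over F_p. -/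
open Polynomial

/-- A nonzero polynomial over `ZMod p` with degree `< p` that is divisible by
`(X+1)^k` has more than `k` nonzero coefficients. -/
lemma sparse_aux (p : ℕ) [Fact p.Prime] :
    ∀ N (f : Polynomial (ZMod p)), f.natDegree ≤ N → f ≠ 0 → f.natDegree < p →
      ∀ k : ℕ, (X + 1) ^ k ∣ f → k < f.support.card := by
  intro N
  induction N with
  | zero =>
    intro f hN hf hfp k hdvd
    rcases k with _ | k
    · simpa [Finset.card_pos] using (Polynomial.support_nonempty.mpr hf)
    · exfalso
      have h1 := Polynomial.natDegree_le_of_dvd hdvd hf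
      rw [Polynomial.natDegree_pow] at h1
      have h2 : ((X : (ZMod p)[X]) + 1).natDegree = 1 := by
        simpa using Polynomial.natDegree_X_add_C (1 : ZMod p)
      rw [h2] at h1
      omega
  | succ N ih =>
    intro f hN hf hfp k hdvd
    rcases k with _ | k
    · simpa [Finset.card_pos] using (Polynomial.support_nonempty.mpr hf)
    by_cases h0 : f.coeff 0 = 0
    · -- f = X * g
      obtain ⟨g, hg⟩ := Polynomial.X_dvd_iff.mpr h0
      have hgne : g ≠ 0 := by rintro rfl; simp at hg; exact hf (by simp [hg])
      have hcop : IsCoprime ((X : (ZMod p)[X]) + 1) X := ⟨1, -1, by ring⟩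
      have hdvd' : (X + 1) ^ (k + 1) ∣ g :=
        (hcop.pow_left).dvd_of_dvd_mul_left (by rwa [← hg])
      have hdeg : f.natDegree = g.natDegree + 1 := by
        rw [hg, Polynomial.natDegree_X_mul hgne]
      have hcard : g.support.card = f.support.card := by
        have : f.support = g.support.map ⟨fun n => n + 1, add_left_injective 1⟩ := by
          ext n
          simp only [Polynomial.mem_support_iff, Finset.mem_map,
            Function.Embedding.coeFn_mk]
          constructor
          · intro hn
            rcases n with _ | n
            · exact absurd h0 hn
            · exact ⟨n, by rwa [hg, Polynomial.coeff_X_mul] at hn, rfl⟩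
          · rintro ⟨m, hm, rfl⟩
            rw [hg, Polynomial.coeff_X_mul]; exact hm
        rw [this, Finset.card_map]
      rw [← hcard]
      exact ih g (by omega) hgne (by omega) (k + 1) hdvd'
    · -- constant case / derivative case
      have hfne0 : f.natDegree ≠ 0 := by
        intro hd0
        have h1 := Polynomial.natDegree_le_of_dvd hdvd hf
        rw [Polynomial.natDegree_pow] at h1
        have h2 : ((X : (ZMod p)[X]) + 1).natDegree = 1 := by
          simpa using Polynomial.natDegree_X_add_C (1 : ZMod p)
        rw [h2] at h1
        omega
      have hderiv_dvd : (X + 1) ^ k ∣ Polynomial.derivative f := by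
        obtain ⟨h₀, rfl⟩ := hdvd
        rw [Polynomial.derivative_mul, Polynomial.derivative_pow]
        simp only [Polynomial.derivative_add, Polynomial.derivative_X,
          Polynomial.derivative_one, add_zero, mul_one, Nat.add_sub_cancel]
        exact ⟨Polynomial.C ((k + 1 : ℕ) : ZMod p) * h₀ +
          (X + 1) * Polynomial.derivative h₀, by push_cast; ring⟩
      have hdne : Polynomial.derivative f ≠ 0 := by
        intro hzero
        have hc := Polynomial.coeff_derivative f (f.natDegree - 1)
        rw [hzero, Polynomial.coeff_zero] at hc
        have hrw : f.natDegree - 1 + 1 = f.natDegree := by omega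
        rw [hrw] at hc
        rw [← Nat.cast_add_one, hrw] at hc
        have hlc : f.coeff f.natDegree ≠ 0 := Polynomial.leadingCoeff_ne_zero.mpr hf
        have hd0 : ((f.natDegree : ℕ) : ZMod p) ≠ 0 := by
          intro hz
          rw [ZMod.natCast_eq_zero_iff] at hz
          have := Nat.le_of_dvd (by omega) hz
          omega
        rcases mul_eq_zero.mp hc.symm with h | h
        · exact hlc h
        · exact hd0 h
      have hdlt : (Polynomial.derivative f).natDegree < f.natDegree :=
        Polynomial.natDegree_derivative_lt hfne0
      have hsub : (Polynomial.derivative f).support ⊆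
          (f.support.erase 0).image (fun n => n - 1) := by
        intro n hn
        rw [Polynomial.mem_support_iff, Polynomial.coeff_derivative] at hn
        have : f.coeff (n + 1) ≠ 0 := by
          intro h; rw [h, zero_mul] at hn; exact hn rfl
        refine Finset.mem_image.mpr ⟨n + 1, ?_, by omega⟩
        exact Finset.mem_erase.mpr ⟨by omega, Polynomial.mem_support_iff.mpr this⟩
      have h0mem : (0 : ℕ) ∈ f.support := Polynomial.mem_support_iff.mpr h0
      have hcardlt : (Polynomial.derivative f).support.card < f.support.card := by
        calc (Polynomial.derivative f).support.card
            ≤ ((f.support.erase 0).image (fun n => n - 1)).card := Finset.card_le_card hsub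
          _ ≤ (f.support.erase 0).card := Finset.card_image_le
          _ = f.support.card - 1 := Finset.card_erase_of_mem h0mem
          _ < f.support.card := by
              have : 0 < f.support.card := Finset.card_pos.mpr ⟨0, h0mem⟩
              omega
      have := ih (Polynomial.derivative f) (by omega) hdne (by omega) k hderiv_dvd
      omega

/-- For `0 ≤ i ≤ j ≤ a ≤ p-1`, the `(i+1)×(i+1)` matrix with `(m,n)`-entry
`C(a-n, j-m) mod p` is invertible over `F_p`. -/
theorem stmt_10 (p a i j : ℕ) [Fact p.Prime] (hij : i ≤ j) (hja : j ≤ a)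
    (hap : a ≤ p - 1) :
    IsUnit (Matrix.of fun m n : Fin (i + 1) =>
      (((a - (n : ℕ)).choose (j - (m : ℕ)) : ℕ) : ZMod p)) := by
  have hp2 : 2 ≤ p := (Fact.out : p.Prime).two_le
  have hap' : a < p := by omega
  rw [Matrix.isUnit_iff_isUnit_det, isUnit_iff_ne_zero]
  intro hdet
  obtain ⟨v, hv, hMv⟩ := Matrix.exists_mulVec_eq_zero_iff.mpr hdet
  set P : Polynomial (ZMod p) :=
    ∑ n : Fin (i + 1), Polynomial.C (v n) * (Polynomial.X + 1) ^ (a - (n : ℕ)) with hP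
  have hcoeff : ∀ r : ℕ, P.coeff r = ∑ n : Fin (i + 1), v n * ((a - (n : ℕ)).choose r : ZMod p) := by
    intro r
    rw [hP, Polynomial.finset_sum_coeff]
    refine Finset.sum_congr rfl fun n _ => ?_
    rw [Polynomial.coeff_C_mul, Polynomial.coeff_X_add_one_pow]
  -- coefficients beyond degree a vanish
  have hhigh : ∀ r : ℕ, a < r → P.coeff r = 0 := by
    intro r hr
    rw [hcoeff]
    refine Finset.sum_eq_zero fun n _ => ?_
    rw [Nat.choose_eq_zero_of_lt (by omega), Nat.cast_zero, mul_zero]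
  -- the middle coefficients vanish, from the kernel equation
  have hmid : ∀ r : ℕ, j - i ≤ r → r ≤ j → P.coeff r = 0 := by
    intro r h1 h2
    have hm : j - r < i + 1 := by omega
    have := congrFun hMv ⟨j - r, hm⟩
    have hjr : j - (j - r) = r := by omega
    rw [Matrix.mulVec, dotProduct] at this
    simp only [Matrix.of_apply, hjr, Pi.zero_apply] at this
    rw [hcoeff]
    rw [← this]
    exact Finset.sum_congr rfl fun n _ => mul_comm _ _
  -- P ≠ 0
  have hPne : P ≠ 0 := by
    intro hP0
    have hS : (Finset.univ.filter fun n : Fin (i + 1) => v n ≠ 0).Nonempty := by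
      by_contra h
      apply hv
      funext n
      by_contra hn
      exact h ⟨n, Finset.mem_filter.mpr ⟨Finset.mem_univ n, hn⟩⟩
    set S := Finset.univ.filter fun n : Fin (i + 1) => v n ≠ 0
    set n0 := S.min' hS with hn0
    have hn0S : n0 ∈ S := S.min'_mem hS
    have hvn0 : v n0 ≠ 0 := (Finset.mem_filter.mp hn0S).2
    have hc : P.coeff (a - (n0 : ℕ)) = v n0 := by
      rw [hcoeff]
      rw [Finset.sum_eq_single n0]
      · rw [Nat.choose_self, Nat.cast_one, mul_one]
      · intro n _ hne
        by_cases hvn : v n = 0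
        · rw [hvn, zero_mul]
        · have hnS : n ∈ S := Finset.mem_filter.mpr ⟨Finset.mem_univ n, hvn⟩
          have hle : n0 ≤ n := S.min'_le n hnS
          have hlt : (n0 : ℕ) < (n : ℕ) := by
            rcases lt_or_eq_of_le hle with h | h
            · exact h
            · exact absurd h.symm hne
          have hna : (n : ℕ) ≤ a := le_trans (Nat.le_of_lt_succ n.isLt) (by omega)
          rw [Nat.choose_eq_zero_of_lt (by omega), Nat.cast_zero, mul_zero]
      · intro h; exact absurd (Finset.mem_univ n0) h
    rw [hP0, Polynomial.coeff_zero] at hc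
    exact hvn0 hc.symm
  -- (X+1)^(a-i) divides P
  have hdvd : (Polynomial.X + 1) ^ (a - i) ∣ P := by
    rw [hP]
    refine Finset.dvd_sum fun n _ => ?_
    have hn : (n : ℕ) ≤ i := Nat.le_of_lt_succ n.isLt
    refine ⟨Polynomial.C (v n) * (Polynomial.X + 1) ^ (i - (n : ℕ)), ?_⟩
    have hsplit : a - (n : ℕ) = (a - i) + (i - (n : ℕ)) := by omega
    rw [hsplit, pow_add]
    ring
  -- support bound
  have hsupp : P.support ⊆ Finset.range (a + 1) \ Finset.Icc (j - i) j := by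
    intro r hr
    rw [Polynomial.mem_support_iff] at hr
    rw [Finset.mem_sdiff, Finset.mem_range, Finset.mem_Icc]
    constructor
    · by_contra h
      exact hr (hhigh r (by omega))
    · intro ⟨h1, h2⟩
      exact hr (hmid r h1 h2)
  have hcard : P.support.card ≤ a - i := by
    have hsub : Finset.Icc (j - i) j ⊆ Finset.range (a + 1) := by
      intro x hx
      rw [Finset.mem_Icc] at hx
      rw [Finset.mem_range]
      omega
    calc P.support.card ≤ (Finset.range (a + 1) \ Finset.Icc (j - i) j).card :=
          Finset.card_le_card hsupp
      _ = (a + 1) - (i + 1) := by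
          rw [Finset.card_sdiff_of_subset hsub, Finset.card_range, Nat.card_Icc]
          congr 1
          omega
      _ = a - i := by omega
  have hdegP : P.natDegree < p := by
    have : P.natDegree ≤ a := Polynomial.natDegree_le_iff_coeff_eq_zero.mpr fun r hr => hhigh r hr
    omega
  have := sparse_aux p P.natDegree P le_rfl hPne hdegP (a - i) hdvd
  omega
end

section
/- Let p ≤ r with r ≡ a mod (p-1) and 1 ≤ a ≤ n ≤ p-1. Then ∑_{0 < l < r, l ≡ a mod (p-1)} C(r,l)·C(l,n) ≡ δ_{n,a}·C(r,a) mod p, where δ_{n,a} = 1 if n = a and 0 otherwise. -/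
private lemma sum_units_pow (p : ℕ) [Fact p.Prime] (i : ℕ) :
    (∑ x : (ZMod p)ˣ, (x : ZMod p) ^ i) = if (p - 1) ∣ i then -1 else 0 := by
  classical
  have h := FiniteField.sum_pow_units (ZMod p) i
  rw [ZMod.card] at h
  simpa using h

private lemma pow_mod_red {p : ℕ} [Fact p.Prime] {c : ZMod p} (hc : c ≠ 0) (i : ℕ) :
    c ^ i = c ^ (i % (p - 1)) := by
  conv_lhs => rw [← Nat.div_add_mod i (p - 1)]
  rw [pow_add, pow_mul, ZMod.pow_card_sub_one_eq_one hc, one_pow, one_mul]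

/-- For `p ≤ r`, `r ≡ a mod (p-1)`, `1 ≤ a ≤ n ≤ p-1`:
`∑_{0 < l < r, l ≡ a mod (p-1)} C(r,l)C(l,n) ≡ δ_{n,a}·C(r,a) mod p`. -/
theorem stmt_11 (p r a n : ℕ) [Fact p.Prime] (hr : p ≤ r)
    (hra : r % (p - 1) = a % (p - 1)) (ha : 1 ≤ a) (han : a ≤ n) (hn : n ≤ p - 1) :
    (∑ l ∈ Finset.Ioo 0 r,
        if l % (p - 1) = a % (p - 1) then (r.choose l * l.choose n : ZMod p) else 0) =
      if n = a then (r.choose a : ZMod p) else 0 := by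
  classical
  have hp : p.Prime := Fact.out
  have hp2 : 2 ≤ p := hp.two_le
  have hq1 : 1 ≤ p - 1 := by omega
  have hamod : a % (p - 1) < p - 1 := Nat.mod_lt _ hq1
  set b := (p - 1) - a % (p - 1) with hbdef
  have hqab : (p - 1) ∣ a + b := by
    have h := Nat.div_add_mod a (p - 1)
    refine ⟨a / (p - 1) + 1, ?_⟩
    rw [Nat.mul_add, Nat.mul_one]
    omega
  have hdvd : ∀ l : ℕ, (p - 1) ∣ (l + b) ↔ l % (p - 1) = a % (p - 1) := by
    intro l
    have h1 : (a + b) ≡ 0 [MOD (p - 1)] := (Nat.modEq_zero_iff_dvd).2 hqab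
    constructor
    · intro h
      have h2 : (l + b) ≡ (a + b) [MOD (p - 1)] :=
        ((Nat.modEq_zero_iff_dvd).2 h).trans h1.symm
      exact Nat.ModEq.add_right_cancel' b h2
    · intro h
      have h2 : (l + b) ≡ (a + b) [MOD (p - 1)] :=
        Nat.ModEq.add_right b (show l ≡ a [MOD (p - 1)] from h)
      exact (Nat.modEq_zero_iff_dvd).1 (h2.trans h1)
  have hnr : n ≤ r := by omega
  have hrn1 : 1 ≤ r - n := by omega
  -- Step 1: filter via sum over units
  have key : ∀ l ∈ Finset.Ioo 0 r,
      (if l % (p - 1) = a % (p - 1) then (r.choose l * l.choose n : ZMod p) else 0)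
        = -((∑ x : (ZMod p)ˣ, (x : ZMod p) ^ (l + b)) * (r.choose l * l.choose n)) := by
    intro l _
    rw [sum_units_pow]
    by_cases h : l % (p - 1) = a % (p - 1)
    · rw [if_pos h, if_pos ((hdvd l).2 h)]; ring
    · rw [if_neg h, if_neg (fun hd => h ((hdvd l).1 hd))]; ring
  rw [Finset.sum_congr rfl key]
  have swap :
      (∑ l ∈ Finset.Ioo 0 r,
          -((∑ x : (ZMod p)ˣ, (x : ZMod p) ^ (l + b)) * (r.choose l * l.choose n)))
        = -(∑ x : (ZMod p)ˣ, ∑ l ∈ Finset.Ioo 0 r,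
            (x : ZMod p) ^ (l + b) * (r.choose l * l.choose n)) := by
    have e1 : ∀ l ∈ Finset.Ioo 0 r,
        -((∑ x : (ZMod p)ˣ, (x : ZMod p) ^ (l + b)) * ((r.choose l : ZMod p) * (l.choose n : ZMod p)))
          = -(∑ x : (ZMod p)ˣ, (x : ZMod p) ^ (l + b) * ((r.choose l : ZMod p) * (l.choose n : ZMod p))) := by
      intro l _
      rw [Finset.sum_mul]
    rw [Finset.sum_congr rfl e1, Finset.sum_neg_distrib, Finset.sum_comm]
  rw [swap]
  -- Step 2: inner sum identity
  have inner : ∀ x : (ZMod p)ˣ,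
      (∑ l ∈ Finset.Ioo 0 r, (x : ZMod p) ^ (l + b) * (r.choose l * l.choose n))
        = (r.choose n : ZMod p) * ((x : ZMod p) ^ (n + b) * (1 + (x : ZMod p)) ^ (r - n))
          - (r.choose n : ZMod p) * (x : ZMod p) ^ (r + b) := by
    intro x
    set y : ZMod p := (x : ZMod p) with hy
    have hfull : (∑ l ∈ Finset.range (r + 1), y ^ (l + b) * (r.choose l * l.choose n))
        = (r.choose n : ZMod p) * (y ^ (n + b) * (1 + y) ^ (r - n)) := by
      rw [Finset.range_eq_Ico,
        ← Finset.sum_Ico_consecutive _ (Nat.zero_le n) (by omega : n ≤ r + 1)]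
      have h1 : (∑ l ∈ Finset.Ico 0 n, y ^ (l + b) * (r.choose l * l.choose n)) = 0 := by
        refine Finset.sum_eq_zero fun l hl => ?_
        rw [Finset.mem_Ico] at hl
        rw [Nat.choose_eq_zero_of_lt hl.2]
        push_cast
        ring
      rw [h1, zero_add, Finset.sum_Ico_eq_sum_range]
      have hre : r + 1 - n = (r - n) + 1 := by omega
      rw [hre]
      have h2 : ∀ i ∈ Finset.range ((r - n) + 1),
          y ^ (n + i + b) * (r.choose (n + i) * (n + i).choose n)
            = (r.choose n : ZMod p) * y ^ (n + b)
                * (y ^ i * 1 ^ ((r - n) - i) * ((r - n).choose i : ZMod p)) := by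
        intro i hi
        rw [Finset.mem_range] at hi
        have hni : n + i ≤ r := by omega
        have hcc : r.choose (n + i) * (n + i).choose n = r.choose n * (r - n).choose i := by
          simpa using Nat.choose_mul (n := r) (Nat.le_add_right n i)
        have hcast : ((r.choose (n + i) : ZMod p) * ((n + i).choose n : ZMod p))
            = (r.choose n : ZMod p) * ((r - n).choose i : ZMod p) := by
          have h := congrArg (fun m : ℕ => (m : ZMod p)) hcc
          push_cast at h
          exact h
        rw [hcast, show n + i + b = (n + b) + i by ring, pow_add]
        ring
      rw [Finset.sum_congr rfl h2, ← Finset.mul_sum, add_comm (1 : ZMod p) y, add_pow,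
        mul_assoc]
    have hsplit : (∑ l ∈ Finset.range (r + 1), y ^ (l + b) * (r.choose l * l.choose n))
        = y ^ (0 + b) * (r.choose 0 * (Nat.choose 0 n : ZMod p))
          + (∑ l ∈ Finset.Ioo 0 r, y ^ (l + b) * (r.choose l * l.choose n))
          + y ^ (r + b) * (r.choose r * r.choose n) := by
      rw [Finset.sum_range_succ, Finset.range_eq_Ico,
        Finset.sum_eq_sum_Ico_succ_bot (by omega : 0 < r), Finset.Ico_add_one_left_eq_Ioo]
    have hF0 : y ^ (0 + b) * ((r.choose 0 : ZMod p) * (Nat.choose 0 n : ZMod p)) = 0 := by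
      rw [Nat.choose_eq_zero_of_lt (by omega : 0 < n)]
      push_cast
      ring
    have hFr : y ^ (r + b) * ((r.choose r : ZMod p) * (r.choose n : ZMod p))
        = (r.choose n : ZMod p) * y ^ (r + b) := by
      rw [Nat.choose_self]
      push_cast
      ring
    rw [hfull] at hsplit
    rw [hF0, hFr] at hsplit
    linear_combination -hsplit
  rw [Finset.sum_congr rfl (fun x _ => inner x), Finset.sum_sub_distrib,
    ← Finset.mul_sum, ← Finset.mul_sum]
  -- Step 3: evaluate the two unit sums
  have hB : (∑ x : (ZMod p)ˣ, (x : ZMod p) ^ (r + b)) = -1 := by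
    rw [sum_units_pow, if_pos ((hdvd r).2 hra)]
  have hA : (∑ x : (ZMod p)ˣ, (x : ZMod p) ^ (n + b) * (1 + (x : ZMod p)) ^ (r - n))
      = if n = a then -2 else -1 := by
    rcases eq_or_lt_of_le han with hna | hna
    · -- n = a
      subst hna
      rw [if_pos rfl]
      have hterm : ∀ x : (ZMod p)ˣ,
          (x : ZMod p) ^ (a + b) * (1 + (x : ZMod p)) ^ (r - a)
            = if (1 : ZMod p) + (x : ZMod p) = 0 then 0 else 1 := by
        intro x
        obtain ⟨k, hk⟩ := (hdvd a).2 rfl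
        have hx1 : (x : ZMod p) ^ (a + b) = 1 := by
          rw [hk, pow_mul, ZMod.pow_card_sub_one_eq_one (Units.ne_zero x), one_pow]
        rw [hx1, one_mul]
        by_cases hz : (1 : ZMod p) + (x : ZMod p) = 0
        · rw [if_pos hz, hz, zero_pow (by omega : r - a ≠ 0)]
        · rw [if_neg hz, pow_mod_red hz]
          have hdd : (p - 1) ∣ (r - a) := by
            have h : a ≡ r [MOD (p - 1)] := hra.symm
            exact (Nat.modEq_iff_dvd' hnr).1 h
          obtain ⟨c, hc⟩ := hdd
          rw [hc, Nat.mul_mod_right, pow_zero]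
      rw [Finset.sum_congr rfl (fun x _ => hterm x)]
      have hcond : ∀ x : (ZMod p)ˣ,
          ((1 : ZMod p) + (x : ZMod p) = 0) ↔ x = (-1 : (ZMod p)ˣ) := by
        intro x
        rw [Units.ext_iff, Units.val_neg, Units.val_one]
        constructor
        · intro h; linear_combination h
        · intro h; rw [h]; ring
      have step1 : (∑ x : (ZMod p)ˣ, (if (1 : ZMod p) + (x : ZMod p) = 0 then (0 : ZMod p) else 1))
          = ∑ x : (ZMod p)ˣ, ((1 : ZMod p) - if x = (-1 : (ZMod p)ˣ) then 1 else 0) := by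
        refine Finset.sum_congr rfl fun x _ => ?_
        rw [if_congr (hcond x) rfl rfl]
        by_cases h : x = (-1 : (ZMod p)ˣ) <;> simp [h]
      rw [step1, Finset.sum_sub_distrib, Finset.sum_const, Finset.card_univ,
        Finset.sum_ite_eq' Finset.univ (-1 : (ZMod p)ˣ) (fun _ => (1 : ZMod p)),
        if_pos (Finset.mem_univ _), ZMod.card_units, nsmul_eq_mul, mul_one,
        Nat.cast_sub (by omega : 1 ≤ p), Nat.cast_one, ZMod.natCast_self]
      ring
    · -- a < n
      rw [if_neg (by omega : ¬ n = a)]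
      set d := n - a with hddef
      have hd1 : 1 ≤ d := by omega
      set e0 := (p - 1) - d with he0
      have he01 : 1 ≤ e0 := by omega
      have he0q : e0 < p - 1 := by omega
      have hrnd : (p - 1) ∣ (r - n) + d := by
        have h : a ≡ r [MOD (p - 1)] := hra.symm
        have h2 : (p - 1) ∣ r - a := (Nat.modEq_iff_dvd' (by omega)).1 h
        have h3 : r - n + d = r - a := by omega
        rw [h3]; exact h2
      have hmod : (r - n) % (p - 1) = e0 := by
        obtain ⟨k, hk⟩ := hrnd
        rcases k with _ | k'
        · omega
        · have h4 : r - n = e0 + (p - 1) * k' := by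
            rw [Nat.mul_succ] at hk; omega
          rw [h4, Nat.add_mul_mod_self_left]
          exact Nat.mod_eq_of_lt he0q
      have hterm : ∀ x : (ZMod p)ˣ,
          (x : ZMod p) ^ (n + b) * (1 + (x : ZMod p)) ^ (r - n)
            = (x : ZMod p) ^ (n + b) * (1 + (x : ZMod p)) ^ e0 := by
        intro x
        by_cases hz : (1 : ZMod p) + (x : ZMod p) = 0
        · rw [hz, zero_pow (by omega : r - n ≠ 0), zero_pow (by omega : e0 ≠ 0)]
        · rw [pow_mod_red hz (r - n), hmod]
      rw [Finset.sum_congr rfl (fun x _ => hterm x)]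
      have hexp : ∀ x : (ZMod p)ˣ,
          (x : ZMod p) ^ (n + b) * (1 + (x : ZMod p)) ^ e0
            = ∑ k ∈ Finset.range (e0 + 1),
                (x : ZMod p) ^ (n + b + k) * (e0.choose k : ZMod p) := by
        intro x
        rw [add_comm (1 : ZMod p) _, add_pow, Finset.mul_sum]
        refine Finset.sum_congr rfl fun k _ => ?_
        rw [pow_add]
        ring
      rw [Finset.sum_congr rfl (fun x _ => hexp x), Finset.sum_comm]
      have hinner : ∀ k ∈ Finset.range (e0 + 1),
          (∑ x : (ZMod p)ˣ, (x : ZMod p) ^ (n + b + k) * (e0.choose k : ZMod p))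
            = if k = e0 then (-1 : ZMod p) else 0 := by
        intro k hk
        rw [Finset.mem_range] at hk
        rw [← Finset.sum_mul, sum_units_pow]
        by_cases hke : k = e0
        · subst hke
          have hdv : (p - 1) ∣ n + b + e0 := by
            have h5 : n + b + e0 = (a + b) + (p - 1) := by omega
            rw [h5]
            exact dvd_add hqab dvd_rfl
          rw [if_pos hdv, if_pos rfl, Nat.choose_self, Nat.cast_one, neg_one_mul]
        · have hndv : ¬ (p - 1) ∣ n + b + k := by
            intro h
            have h6 := Nat.dvd_sub h hqab
            have h7 : n + b + k - (a + b) = d + k := by omega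
            rw [h7] at h6
            have h8 := Nat.le_of_dvd (by omega) h6
            omega
          rw [if_neg hndv, if_neg hke, zero_mul]
      rw [Finset.sum_congr rfl hinner,
        Finset.sum_ite_eq' (Finset.range (e0 + 1)) e0 (fun _ => (-1 : ZMod p)),
        if_pos (Finset.mem_range.2 (by omega))]
  rw [hA, hB]
  by_cases hna : n = a
  · subst hna
    rw [if_pos rfl, if_pos rfl]
    ring
  · rw [if_neg hna, if_neg hna]
    ring
end

section
/- Let p be an odd prime, 1 ≤ a ≤ p-1 and 1 ≤ i with 2i < a (so i < a-i). Let r ≥ p with r ≡ r_0 mod p, 0 ≤ r_0 ≤ p-1. Then C(r-(a-i)-1, i) ≡ 0 mod p if and only if r_0 ∈ {a-i+1, a-i+2, ..., a-1, a}. -/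
lemma choose_zmod_eq_zero_iff (p n i : ℕ) (hp : p.Prime) (hi : i < p) :
    ((n.choose i : ZMod p) = 0) ↔ n % p < i := by
  haveI : Fact p.Prime := ⟨hp⟩
  have h := (Choose.choose_modEq_choose_mod_mul_choose_div_nat (p := p) (n := n) (k := i))
  have hip : i % p = i := Nat.mod_eq_of_lt hi
  have hid : i / p = 0 := Nat.div_eq_of_lt hi
  rw [hip, hid, Nat.choose_zero_right, mul_one] at h
  have hcast : (n.choose i : ZMod p) = ((n % p).choose i : ZMod p) :=
    (ZMod.natCast_eq_natCast_iff _ _ _).mpr h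
  rw [hcast, ZMod.natCast_eq_zero_iff]
  constructor
  · intro hdvd
    by_contra hlt
    push_neg at hlt
    have h1 : (n % p).choose i ∣ (n % p).factorial :=
      ⟨i.factorial * (n % p - i).factorial, by
        rw [← Nat.choose_mul_factorial_mul_factorial hlt]; ring⟩
    have h2 : p ∣ (n % p).factorial := hdvd.trans h1
    have h3 : p ≤ n % p := (Nat.Prime.dvd_factorial hp).mp h2
    exact absurd h3 (not_le.mpr (Nat.mod_lt _ hp.pos))
  · intro hlt
    rw [Nat.choose_eq_zero_of_lt hlt]
    exact dvd_zero p

lemma mod_of_decomp (p n k s : ℕ) (h : n = p * k + s) (hs : s < p) : n % p = s := by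
  rw [h, Nat.mul_add_mod, Nat.mod_eq_of_lt hs]

/-- For `p ≥ 3`, `1 ≤ a ≤ p-1`, `1 ≤ i` with `2i < a`, and `p ≤ r` with `r_0 = r % p`:
`C(r-(a-i)-1, i) ≡ 0 mod p` iff `r_0 ∈ {a-i+1, …, a}`. -/
theorem stmt_14 (p r a i : ℕ) (hp : p.Prime) (hp3 : 3 ≤ p) (ha1 : 1 ≤ a)
    (ha2 : a ≤ p - 1) (hi : 1 ≤ i) (hia : 2 * i < a) (hr : p ≤ r) :
    ((r - (a - i) - 1).choose i : ZMod p) = 0 ↔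
      a - i + 1 ≤ r % p ∧ r % p ≤ a := by
  have hip : i < p := by omega
  rw [choose_zmod_eq_zero_iff p _ i hp hip]
  obtain ⟨q, m, hmp, rfl⟩ : ∃ q m, m < p ∧ r = p * q + m :=
    ⟨r / p, r % p, Nat.mod_lt _ hp.pos, (Nat.div_add_mod r p).symm⟩
  have hrm : (p * q + m) % p = m := mod_of_decomp p _ q m rfl hmp
  rw [hrm]
  have hq1 : 1 ≤ q := by
    rcases Nat.eq_zero_or_pos q with h | h
    · subst h; simp at hr; omega
    · exact h
  have hpq : p * 1 ≤ p * q := Nat.mul_le_mul_left p hq1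
  rw [Nat.mul_one] at hpq
  have hmod : (p * q + m - (a - i) - 1) % p =
      if a - i + 1 ≤ m then m - (a - i) - 1 else p + m - (a - i) - 1 := by
    split_ifs with h
    · exact mod_of_decomp p _ q _ (by omega) (by omega)
    · obtain ⟨q', rfl⟩ : ∃ q', q = q' + 1 := ⟨q - 1, by omega⟩
      have hpq' : p * (q' + 1) = p * q' + p := by ring
      exact mod_of_decomp p _ q' _ (by omega) (by omega)
  rw [hmod]
  split_ifs with h <;> omega
end

section
/- Let m ≥ 1 and r ≥ m(p+1) - 1. Every homogeneous polynomial of degree r in F_p[X,Y] is congruent, modulo the F_p-span of polynomials divisible by θ^m, to an F_p-linear combination of the monomials X^{r-i}Y^i for 0 ≤ i ≤ m(p+1)-(m+1) together with X^iY^{r-i} for 0 ≤ i < m. -/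
open MvPolynomial

private noncomputable def theta (p : ℕ) : MvPolynomial (Fin 2) (ZMod p) :=
  X 0 ^ p * X 1 - X 0 * X 1 ^ p

private def Red (p m r : ℕ) (f : MvPolynomial (Fin 2) (ZMod p)) : Prop :=
  ∃ (b c : ℕ → ZMod p) (G : MvPolynomial (Fin 2) (ZMod p)),
    theta p ^ m ∣ G ∧
    f = (∑ i ∈ Finset.range (m * (p + 1) - m), C (b i) * X 0 ^ (r - i) * X 1 ^ i) +
        (∑ i ∈ Finset.range m, C (c i) * X 0 ^ i * X 1 ^ (r - i)) + G

private lemma red_zero (p m r : ℕ) : Red p m r 0 :=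
  ⟨0, 0, 0, dvd_zero _, by simp⟩

private lemma red_dvd {p m r : ℕ} {G : MvPolynomial (Fin 2) (ZMod p)}
    (h : theta p ^ m ∣ G) : Red p m r G :=
  ⟨0, 0, G, h, by simp⟩

private lemma red_add {p m r : ℕ} {f g : MvPolynomial (Fin 2) (ZMod p)}
    (hf : Red p m r f) (hg : Red p m r g) : Red p m r (f + g) := by
  obtain ⟨b, c, G, hG, hf⟩ := hf
  obtain ⟨b', c', G', hG', hg⟩ := hg
  refine ⟨b + b', c + c', G + G', dvd_add hG hG', ?_⟩
  subst hf hg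
  simp only [Pi.add_apply, map_add, add_mul, Finset.sum_add_distrib]
  ring

private lemma red_smul {p m r : ℕ} (a : ZMod p) {f : MvPolynomial (Fin 2) (ZMod p)}
    (hf : Red p m r f) : Red p m r (a • f) := by
  obtain ⟨b, c, G, hG, hf⟩ := hf
  refine ⟨a • b, a • c, a • G, ?_, ?_⟩
  · rw [smul_eq_C_mul]; exact hG.mul_left _
  subst hf
  simp only [Pi.smul_apply, smul_eq_mul, map_mul, smul_eq_C_mul, mul_add, Finset.mul_sum,
    mul_assoc]

private lemma red_sum {p m r : ℕ} {s : Finset ℕ} {f : ℕ → MvPolynomial (Fin 2) (ZMod p)}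
    (h : ∀ i ∈ s, Red p m r (f i)) : Red p m r (∑ i ∈ s, f i) :=
  Finset.sum_induction f (Red p m r) (fun _ _ => red_add) (red_zero p m r) h

private lemma red_sub {p m r : ℕ} {f g : MvPolynomial (Fin 2) (ZMod p)}
    (hf : Red p m r f) (hg : Red p m r g) : Red p m r (f - g) := by
  have := red_add hf (red_smul (-1) hg)
  simpa [sub_eq_add_neg] using this

private lemma red_mono1 {p m r : ℕ} {i : ℕ} (h : i < m * (p + 1) - m) :
    Red p m r (X 0 ^ (r - i) * X 1 ^ i) := by
  refine ⟨fun j => if j = i then 1 else 0, 0, 0, dvd_zero _, ?_⟩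
  simp only [map_zero, zero_mul, Finset.sum_const_zero, add_zero, apply_ite C, map_one,
    map_zero, ite_mul, one_mul, zero_mul]
  rw [Finset.sum_ite_eq' (Finset.range (m * (p + 1) - m)) i
    (fun j => X 0 ^ (r - j) * X 1 ^ j)]
  simp [h]

private lemma red_mono2 {p m r : ℕ} {i : ℕ} (h : i < m) :
    Red p m r (X 0 ^ i * X 1 ^ (r - i)) := by
  refine ⟨0, fun j => if j = i then 1 else 0, 0, dvd_zero _, ?_⟩
  simp only [map_zero, zero_mul, Finset.sum_const_zero, zero_add, add_zero, apply_ite C,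
    map_one, map_zero, ite_mul, one_mul, zero_mul]
  rw [Finset.sum_ite_eq' (Finset.range m) i (fun j => X 0 ^ j * X 1 ^ (r - j))]
  simp [h]

private lemma theta_pow (p : ℕ) (hp : 1 ≤ p) (m a b : ℕ) :
    X 0 ^ a * X 1 ^ b * theta p ^ m =
      ∑ k ∈ Finset.range (m + 1),
        ((-1 : ZMod p) ^ (k + m) * (m.choose k : ZMod p)) •
          (X 0 ^ (a + m + (p - 1) * k) * X 1 ^ (b + m + (p - 1) * (m - k))) := by
  have h0 : (X 0 : MvPolynomial (Fin 2) (ZMod p)) ^ p = X 0 * X 0 ^ (p - 1) := by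
    rw [← pow_succ']; congr 1; omega
  have h1 : (X 1 : MvPolynomial (Fin 2) (ZMod p)) ^ p = X 1 * X 1 ^ (p - 1) := by
    rw [← pow_succ']; congr 1; omega
  have hθ : theta p = X 0 * X 1 * ((X 0 : MvPolynomial (Fin 2) (ZMod p)) ^ (p - 1)
      - X 1 ^ (p - 1)) := by
    unfold theta; rw [h0, h1]; ring
  rw [hθ, mul_pow, mul_pow, sub_pow, Finset.mul_sum, Finset.mul_sum]
  refine Finset.sum_congr rfl fun k hk => ?_
  rw [smul_eq_C_mul, map_mul, map_pow, map_neg, map_one, map_natCast,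
    pow_add (X 0 : MvPolynomial (Fin 2) (ZMod p)), pow_add (X 0 : MvPolynomial (Fin 2) (ZMod p)),
    pow_add (X 1 : MvPolynomial (Fin 2) (ZMod p)), pow_add (X 1 : MvPolynomial (Fin 2) (ZMod p)),
    pow_mul, pow_mul]
  ring

private lemma red_monomial (p m r : ℕ) [Fact p.Prime] (hm : 1 ≤ m)
    (hr : m * (p + 1) - 1 ≤ r) : ∀ j, j ≤ r → Red p m r (X 0 ^ (r - j) * X 1 ^ j) := by
  have hp : 2 ≤ p := (Fact.out : p.Prime).two_le
  have hmp : m * (p + 1) = m * p + m := by ring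
  intro j
  induction j using Nat.strong_induction_on with
  | _ j ih =>
  intro hjr
  rcases lt_or_ge j (m * (p + 1) - m) with hj1 | hj1
  · exact red_mono1 hj1
  rcases lt_or_ge (r - m) j with hj2 | hj2
  · have h := red_mono2 (p := p) (r := r) (show r - j < m by omega)
    rwa [show r - (r - j) = j by omega] at h
  -- main case : m * p ≤ j ≤ r - m
  have hmp2 : m * 2 ≤ m * p := Nat.mul_le_mul_left m hp
  obtain ⟨a0, hra⟩ : ∃ a0, r - j = a0 + m := ⟨r - j - m, by omega⟩
  obtain ⟨b0, hja⟩ : ∃ b0, j = b0 + m * p := ⟨j - m * p, by omega⟩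
  have hmm : m + (p - 1) * m = m * p := by
    have h2 : p - 1 + 1 = p := by omega
    calc m + (p - 1) * m = ((p - 1) + 1) * m := by ring
      _ = p * m := by rw [h2]
      _ = m * p := Nat.mul_comm _ _
  have key := theta_pow p (by omega) m a0 b0
  rw [Finset.sum_range_succ'] at key
  have hf0 : ((-1 : ZMod p) ^ (0 + m) * (m.choose 0 : ZMod p)) •
      (X 0 ^ (a0 + m + (p - 1) * 0) * X 1 ^ (b0 + m + (p - 1) * (m - 0)))
      = ((-1 : ZMod p) ^ m) • ((X 0 : MvPolynomial (Fin 2) (ZMod p)) ^ (a0 + m)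
          * X 1 ^ (b0 + m * p)) := by
    rw [Nat.sub_zero, Nat.mul_zero, Nat.add_zero,
      show b0 + m + (p - 1) * m = b0 + m * p by omega]
    simp
  rw [hf0] at key
  have hsq : ((-1 : ZMod p) ^ m) • (((-1 : ZMod p) ^ m) •
      ((X 0 : MvPolynomial (Fin 2) (ZMod p)) ^ (a0 + m) * X 1 ^ (b0 + m * p)))
      = X 0 ^ (a0 + m) * X 1 ^ (b0 + m * p) := by
    rw [smul_smul, ← pow_add]
    have h2 : ((-1 : ZMod p)) ^ (m + m) = ((-1 : ZMod p) ^ 2) ^ m := by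
      rw [← pow_mul]; congr 1; ring
    simp [h2]
  have hMeq : X 0 ^ (r - j) * (X 1 : MvPolynomial (Fin 2) (ZMod p)) ^ j
      = ((-1 : ZMod p) ^ m) • (X 0 ^ a0 * X 1 ^ b0 * theta p ^ m
        - ∑ k ∈ Finset.range m,
          ((-1 : ZMod p) ^ (k + 1 + m) * (m.choose (k + 1) : ZMod p)) •
            (X 0 ^ (a0 + m + (p - 1) * (k + 1)) * X 1 ^ (b0 + m + (p - 1) * (m - (k + 1))))) := by
    rw [hra]
    nth_rewrite 1 [hja]
    rw [key, add_sub_cancel_left, hsq]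
  rw [hMeq]
  refine red_smul _ (red_sub (red_dvd (Dvd.intro_left _ rfl)) (red_sum fun k hk => ?_))
  rw [Finset.mem_range] at hk
  have hsplit : (p - 1) * (k + 1) + (p - 1) * (m - (k + 1)) = (p - 1) * m := by
    rw [← Nat.mul_add]; congr 1; omega
  have hk1 : 1 ≤ (p - 1) * (k + 1) := by
    have : 1 * 1 ≤ (p - 1) * (k + 1) := Nat.mul_le_mul (by omega) (by omega)
    omega
  have hjlt : b0 + m + (p - 1) * (m - (k + 1)) < j := by omega
  have hje : r - (b0 + m + (p - 1) * (m - (k + 1))) = a0 + m + (p - 1) * (k + 1) := by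
    omega
  refine red_smul _ ?_
  have h := ih (b0 + m + (p - 1) * (m - (k + 1))) hjlt (by omega)
  rwa [hje] at h

/-- For `m ≥ 1` and `r ≥ m(p+1)-1`, every homogeneous polynomial
`∑_{j=0}^r a_j X^{r-j}Y^j` of degree `r` over `F_p` is, modulo a polynomial divisible by
`θ^m` (`θ = X^pY - XY^p`), an `F_p`-linear combination of the monomials `X^{r-i}Y^i` for
`0 ≤ i ≤ m(p+1)-(m+1)` and `X^iY^{r-i}` for `0 ≤ i < m`. -/
theorem stmt_15 (p m r : ℕ) [Fact p.Prime] (hm : 1 ≤ m) (hr : m * (p + 1) - 1 ≤ r)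
    (a : ℕ → ZMod p) :
    ∃ (b c : ℕ → ZMod p) (G : MvPolynomial (Fin 2) (ZMod p)),
      ((X 0 : MvPolynomial (Fin 2) (ZMod p)) ^ p * X 1 - X 0 * X 1 ^ p) ^ m ∣ G ∧
      (∑ j ∈ Finset.range (r + 1), C (a j) * X 0 ^ (r - j) * X 1 ^ j) =
        (∑ i ∈ Finset.range (m * (p + 1) - m), C (b i) * X 0 ^ (r - i) * X 1 ^ i) +
          (∑ i ∈ Finset.range m, C (c i) * X 0 ^ i * X 1 ^ (r - i)) + G := by
  have : Red p m r (∑ j ∈ Finset.range (r + 1), C (a j) * X 0 ^ (r - j) * X 1 ^ j) := by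
    refine red_sum fun j hj => ?_
    rw [Finset.mem_range] at hj
    have h := red_smul (a j) (red_monomial p m r hm hr j (by omega))
    rwa [smul_eq_C_mul, ← mul_assoc] at h
  exact this
end

section
/- Let p ≥ 2, 2p < r with r ≡ 1 mod (p-1) and Σ_p(r-p) = p-1. Then in F_p[X,Y]: ∑_{k=0}^{p-1} X^p (kX+Y)^{r-p} = -X^r, and ∑_{k=0}^{p-1} (X+kY)^{r-p} Y^p = -Y^r. -/
open MvPolynomial Finset

private lemma sum_digits_pos (p n : ℕ) (hn : n ≠ 0) : 0 < (Nat.digits p n).sum := by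
  have hne : Nat.digits p n ≠ [] := Nat.digits_ne_nil_iff_ne_zero.mpr hn
  have hlast := Nat.getLast_digit_ne_zero p hn
  have hmem := List.getLast_mem hne
  have := List.single_le_sum (l := Nat.digits p n) (fun x _ => Nat.zero_le x) _ hmem
  omega

private lemma zmod_sum_pow (p : ℕ) [Fact p.Prime] (i : ℕ) (hi : i ≠ 0) :
    ∑ k : ZMod p, (k : ZMod p) ^ i = if (p - 1) ∣ i then -1 else 0 := by
  classical
  have hu := FiniteField.sum_pow_units (ZMod p) i
  rw [ZMod.card] at hu
  rw [← hu]
  let φ : (ZMod p)ˣ ↪ ZMod p := ⟨fun x ↦ x, fun _ _ => Units.ext⟩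
  have huniv : univ.map φ = univ \ {0} := by
    ext x
    simp only [mem_map, mem_univ, Function.Embedding.coeFn_mk, true_and, mem_sdiff,
      mem_singleton, φ]
    exact isUnit_iff_ne_zero
  calc
    ∑ x : ZMod p, x ^ i = ∑ x ∈ univ \ {(0 : ZMod p)}, x ^ i := by
      rw [← sum_sdiff ({0} : Finset (ZMod p)).subset_univ, sum_singleton, zero_pow hi, add_zero]
    _ = ∑ x : (ZMod p)ˣ, (x ^ i : ZMod p) := by simp [φ, ← huniv, univ.sum_map φ]; rfl

private lemma key_sum (p q : ℕ) [Fact p.Prime] (hq0 : q ≠ 0) (hqd : (p - 1) ∣ q)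
    (hch : ∀ i, 0 < i → i < q → (p - 1) ∣ i → p ∣ q.choose i)
    (A B : MvPolynomial (Fin 2) (ZMod p)) :
    ∑ k : ZMod p, (C k * A + B) ^ q = -A ^ q := by
  classical
  have hexp : ∀ k : ZMod p, (C k * A + B) ^ q
      = ∑ i ∈ range (q + 1),
          C (k ^ i) * (A ^ i * B ^ (q - i) * C ((q.choose i : ZMod p))) := by
    intro k
    rw [add_pow]
    refine Finset.sum_congr rfl fun i _ => ?_
    rw [mul_pow, ← map_pow, map_natCast C]
    ring
  simp_rw [hexp]
  rw [Finset.sum_comm]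
  have hterm : ∀ i ∈ range (q + 1), (∑ k : ZMod p, C (k ^ i) *
      (A ^ i * B ^ (q - i) * C ((q.choose i : ZMod p))))
      = (if i = q then -A ^ q else 0) := by
    intro i hi
    rw [← Finset.sum_mul, ← map_sum]
    rcases eq_or_ne i 0 with rfl | hi0
    · have : ∑ k : ZMod p, (k : ZMod p) ^ 0 = 0 := by
        simp [Finset.card_univ, ZMod.card, ZMod.natCast_self]
      rw [this]
      simp [hq0, Ne.symm hq0]
    · rw [zmod_sum_pow p i hi0]
      rcases eq_or_ne i q with rfl | hiq
      · rw [if_pos hqd, if_pos rfl]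
        simp
      · simp only [if_neg hiq]
        by_cases hd : (p - 1) ∣ i
        · rw [if_pos hd]
          have hilt : i < q := by
            simp only [Finset.mem_range] at hi; omega
          have : ((q.choose i : ZMod p)) = 0 := by
            rw [ZMod.natCast_eq_zero_iff]
            exact hch i (Nat.pos_of_ne_zero hi0) hilt hd
          rw [this]
          simp
        · rw [if_neg hd]
          simp
  rw [Finset.sum_congr rfl hterm, Finset.sum_ite_eq' (range (q + 1)) q]
  rw [if_pos (Finset.mem_range.mpr (Nat.lt_succ_self q))]

/-- For `2p < r`, `r ≡ 1 mod (p-1)` and `Σ_p(r-p) = p-1`, in `F_p[X,Y]`: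
`∑_{k ∈ F_p} X^p (kX+Y)^{r-p} = -X^r` and `∑_{k ∈ F_p} (X+kY)^{r-p} Y^p = -Y^r`. -/
theorem stmt_16 (p r : ℕ) [Fact p.Prime] (hr : 2 * p < r)
    (hra : r % (p - 1) = 1 % (p - 1)) (hS : (Nat.digits p (r - p)).sum = p - 1) :
    (∑ k : ZMod p,
        (X 0 : MvPolynomial (Fin 2) (ZMod p)) ^ p * (C k * X 0 + X 1) ^ (r - p)) =
        -(X 0 : MvPolynomial (Fin 2) (ZMod p)) ^ r ∧
      (∑ k : ZMod p,
        ((X 0 : MvPolynomial (Fin 2) (ZMod p)) + C k * X 1) ^ (r - p) * X 1 ^ p) =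
        -(X 1 : MvPolynomial (Fin 2) (ZMod p)) ^ r := by
  have hp : p.Prime := Fact.out
  have hp2 : 2 ≤ p := hp.two_le
  set q := r - p with hqdef
  have hq0 : q ≠ 0 := by omega
  -- p ≡ 1 mod (p-1)
  have hpmod : p % (p - 1) = 1 % (p - 1) := by
    have h := Nat.add_mod_left (p - 1) 1
    rwa [show p - 1 + 1 = p by omega] at h
  have hqd : (p - 1) ∣ q := by
    have : p ≡ r [MOD p - 1] := hpmod.trans hra.symm
    exact (Nat.modEq_iff_dvd' (by omega)).mp this
  -- divisibility of binomials
  have hch : ∀ i, 0 < i → i < q → (p - 1) ∣ i → p ∣ q.choose i := by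
    intro i hi0 hiq hd
    by_contra hnd
    have hval : padicValNat p (q.choose i) = 0 := padicValNat.eq_zero_of_not_dvd hnd
    have hk := sub_one_mul_padicValNat_choose_eq_sub_sum_digits (p := p) hiq.le
    rw [hval, mul_zero] at hk
    -- digit sum of i is divisible by p-1 and positive
    have hdvdsum : (p - 1) ∣ (Nat.digits p i).sum := by
      rcases eq_or_lt_of_le hp2 with h | h
      · simp [← h]
      · have hmod : i ≡ (Nat.digits p i).sum [MOD p - 1] := by
          refine Nat.modEq_digits_sum (p - 1) p ?_ i
          rw [hpmod, Nat.mod_eq_of_lt (by omega : 1 < p - 1)]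
        exact (hmod.dvd_iff dvd_rfl).mp hd
    have hpos : 0 < (Nat.digits p i).sum := sum_digits_pos p i (by omega)
    have hsum_ge : p - 1 ≤ (Nat.digits p i).sum := Nat.le_of_dvd hpos hdvdsum
    have hpos2 : 0 < (Nat.digits p (q - i)).sum := sum_digits_pos p (q - i) (by omega)
    omega
  have hkey := key_sum p q hq0 hqd hch
  constructor
  · rw [← Finset.mul_sum, hkey (X 0) (X 1)]
    rw [mul_neg, ← pow_add, show p + q = r by omega]
  · have : ∀ k : ZMod p, ((X 0 : MvPolynomial (Fin 2) (ZMod p)) + C k * X 1) ^ q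
        = (C k * X 1 + X 0) ^ q := fun k => by rw [add_comm]
    simp_rw [this]
    rw [← Finset.sum_mul, hkey (X 1) (X 0)]
    rw [neg_mul, ← pow_add, show q + p = r by omega]
end

section
/- Let p ≥ 3, 1 ≤ i < p-1 with i ≡ a - i mod (p-1) where r ≡ a mod (p-1), 1 ≤ a ≤ p-1, and suppose r ≥ i(p+1) + p and r ≡ i - 1 mod p. Then the binomial coefficient C(r-i, i) ≡ C(p-1, i) ≢ 0 mod p. -/
/-- For `p ≥ 3`, `1 ≤ i < p-1` with `i ≡ a-i mod (p-1)` where `r ≡ a mod (p-1)`,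
`1 ≤ a ≤ p-1`, `r ≥ i(p+1)+p` and `r ≡ i-1 mod p`:
`C(r-i, i) ≡ C(p-1, i) ≢ 0 mod p`. -/
theorem stmt_18 (p r a i : ℕ) (hp : p.Prime) (hp3 : 3 ≤ p) (hi1 : 1 ≤ i)
    (hi2 : i < p - 1) (ha1 : 1 ≤ a) (ha2 : a ≤ p - 1)
    (hra : r % (p - 1) = a % (p - 1))
    (hii : (i : ℤ) ≡ (a : ℤ) - (i : ℤ) [ZMOD ((p : ℤ) - 1)])
    (hr : i * (p + 1) + p ≤ r) (hrp : r % p = i - 1) :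
    ((r - i).choose i : ZMod p) = ((p - 1).choose i : ZMod p) ∧
      ((p - 1).choose i : ZMod p) ≠ 0 := by
  haveI : Fact p.Prime := ⟨hp⟩
  have hp0 : 0 < p := hp.pos
  have hip : i < p := lt_of_lt_of_le hi2 (Nat.sub_le _ _)
  have hne : ((p - 1).choose i : ZMod p) ≠ 0 := by
    rw [Ne, ZMod.natCast_eq_zero_iff]
    intro hdvd
    have hpos : 0 < (p - 1).choose i := Nat.choose_pos (le_of_lt hi2)
    have := (Nat.Prime.dvd_iff_one_le_factorization hp hpos.ne').mp hdvd
    rw [Nat.factorization_choose_eq_zero_of_lt (by omega)] at this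
    omega
  refine ⟨?_, hne⟩
  have hpr : p ≤ r := le_trans (Nat.le_add_left _ _) hr
  have hir : i ≤ r := le_trans hip.le hpr
  have key : (r - i) % p = p - 1 := by
    obtain ⟨q, hq⟩ : ∃ q, r = p * q + (i - 1) := ⟨r / p, by rw [← hrp]; exact (Nat.div_add_mod r p).symm⟩
    have hq1 : 1 ≤ q := by
      rcases Nat.eq_zero_or_pos q with h | h
      · subst h; simp at hq; omega
      · exact h
    obtain ⟨Q, rfl⟩ : ∃ Q, q = Q + 1 := ⟨q - 1, by omega⟩
    have h2 : r - i = p * Q + (p - 1) := by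
      rw [Nat.mul_add, Nat.mul_one] at hq; omega
    rw [h2, Nat.mul_add_mod]
    exact Nat.mod_eq_of_lt (by omega)
  have lucas := @Choose.choose_modEq_choose_mod_mul_choose_div (r - i) i p _
  rw [key, Nat.mod_eq_of_lt hip, Nat.div_eq_of_lt hip, Nat.choose_zero_right] at lucas
  have := (ZMod.intCast_eq_intCast_iff _ _ _).mpr lucas
  simpa using this
end
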